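/- For every positive integer n, every connected graph G with at most 4n−2 edges satisfies G ↛ (nK₂, C₃); that is, there exists a red-blue colouring of the edges of G containing neither a red matching of n edges nor a blue triangle. -/

import Mathlib

open SimpleGraph

/-- `G` contains a copy of `H`, i.e. there is an injective graph homomorphism from `H` to `G`. -/
def ContainsCopy {V W : Type*} (G : SimpleGraph V) (H : SimpleGraph W) : Prop :=
  ∃ f : H →g G, Function.Injective f

/-- `G` arrows `(G₁, G₂)`: for every red/blue colouring of the edges of `G`
(given by a subgraph `R ≤ G` of red edges, the blue edges being `G \ R`),
there is a red copy of `G₁` or a blue copy of `G₂`. -/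
def Arrows {V V₁ V₂ : Type*} (G : SimpleGraph V) (G₁ : SimpleGraph V₁) (G₂ : SimpleGraph V₂) :
    Prop :=
  ∀ R : SimpleGraph V, R ≤ G → ContainsCopy R G₁ ∨ ContainsCopy (G \ R) G₂

/-- The matching `nK₂` with `n` edges. -/
def Matching (n : ℕ) : SimpleGraph (Fin n × Fin 2) where
  Adj a b := a.1 = b.1 ∧ a.2 ≠ b.2
  symm := by constructor; intro a b h; exact ⟨h.1.symm, h.2.symm⟩
  loopless := by constructor; intro a h; exact h.2 rfl

/-- `n` disjoint copies of the graph `H`. -/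
def Copies (n : ℕ) {W : Type*} (H : SimpleGraph W) : SimpleGraph (Fin n × W) where
  Adj a b := a.1 = b.1 ∧ H.Adj a.2 b.2
  symm := by constructor; intro a b h; exact ⟨h.1.symm, h.2.symm⟩
  loopless := by constructor; intro a h; exact H.loopless.irrefl _ h.2

/-- Disjoint union of two graphs. -/
def DisjUnion {V W : Type*} (G : SimpleGraph V) (H : SimpleGraph W) : SimpleGraph (V ⊕ W) where
  Adj a b :=
    match a, b with
    | Sum.inl x, Sum.inl y => G.Adj x y
    | Sum.inr x, Sum.inr y => H.Adj x y
    | _, _ => False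
  symm := by
    constructor
    rintro (x | x) (y | y) h
    · exact h.symm
    · exact h.elim
    · exact h.elim
    · exact h.symm
  loopless := by
    constructor
    rintro (x | x) h
    · exact G.loopless.irrefl _ h
    · exact H.loopless.irrefl _ h


open Finset

namespace NotArrow

variable {V : Type*} [DecidableEq V]

def Step (X : Finset (Finset V)) (e f : Finset V) : Prop :=
  e ∈ X ∧ f ∈ X ∧ (e ∩ f).Nonempty

def Reach (X : Finset (Finset V)) : Finset V → Finset V → Prop :=
  Relation.ReflTransGen (Step X)

theorem Step.symm' {X : Finset (Finset V)} {e f : Finset V} (h : Step X e f) : Step X f e := by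
  obtain ⟨h1, h2, h3⟩ := h
  exact ⟨h2, h1, by rwa [Finset.inter_comm]⟩

theorem Reach.rfl {X : Finset (Finset V)} {e : Finset V} : Reach X e e :=
  Relation.ReflTransGen.refl

theorem Reach.trans {X : Finset (Finset V)} {e f g : Finset V}
    (h : Reach X e f) (h' : Reach X f g) : Reach X e g :=
  Relation.ReflTransGen.trans h h'

theorem Reach.symm {X : Finset (Finset V)} {e f : Finset V} (h : Reach X e f) :
    Reach X f e := by
  induction h with
  | refl => exact .rfl
  | tail _ h2 ih => exact Relation.ReflTransGen.trans (Relation.ReflTransGen.single h2.symm') ih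

theorem Reach.single {X : Finset (Finset V)} {e f : Finset V} (h : Step X e f) : Reach X e f :=
  Relation.ReflTransGen.single h

theorem Reach.mem_left {X : Finset (Finset V)} {e f : Finset V} (h : Reach X e f)
    (hne : e ≠ f) : e ∈ X := by
  rcases h.cases_head with h | ⟨c, hc, _⟩
  · exact absurd h hne
  · exact hc.1

theorem Reach.mem_right {X : Finset (Finset V)} {e f : Finset V} (h : Reach X e f)
    (hne : e ≠ f) : f ∈ X := (h.symm).mem_left (Ne.symm hne)

theorem Reach.mono {X Y : Finset (Finset V)} (hXY : X ⊆ Y) {e f : Finset V}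
    (h : Reach X e f) : Reach Y e f := by
  induction h with
  | refl => exact .rfl
  | tail _ h2 ih => exact ih.tail ⟨hXY h2.1, hXY h2.2.1, h2.2.2⟩

open scoped Classical in
/-- The cluster (connected component) of `e` inside `X`. -/
noncomputable def clusterOf (X : Finset (Finset V)) (e : Finset V) : Finset (Finset V) :=
  X.filter (Reach X e ·)

theorem mem_clusterOf {X : Finset (Finset V)} {e f : Finset V} :
    f ∈ clusterOf X e ↔ f ∈ X ∧ Reach X e f := by
  classical simp [clusterOf]

theorem clusterOf_subset {X : Finset (Finset V)} {e : Finset V} : clusterOf X e ⊆ X :=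
  fun f hf => (mem_clusterOf.mp hf).1

theorem self_mem_clusterOf {X : Finset (Finset V)} {e : Finset V} (he : e ∈ X) :
    e ∈ clusterOf X e := mem_clusterOf.mpr ⟨he, .rfl⟩

theorem clusterOf_eq_of_reach {X : Finset (Finset V)} {e f : Finset V}
    (h : Reach X e f) : clusterOf X e = clusterOf X f := by
  ext g
  simp only [mem_clusterOf]
  exact ⟨fun ⟨hg, hr⟩ => ⟨hg, h.symm.trans hr⟩, fun ⟨hg, hr⟩ => ⟨hg, h.trans hr⟩⟩

/-- The set of clusters of `X`. -/
noncomputable def clustersOf (X : Finset (Finset V)) : Finset (Finset (Finset V)) :=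
  X.image (clusterOf X)

/-- The number of clusters of `X`. -/
noncomputable def kk (X : Finset (Finset V)) : ℕ := (clustersOf X).card

@[simp] theorem clustersOf_empty : clustersOf (∅ : Finset (Finset V)) = ∅ := by
  simp [clustersOf]

@[simp] theorem kk_empty : kk (∅ : Finset (Finset V)) = 0 := by simp [kk]

theorem kk_eq_zero_iff {X : Finset (Finset V)} : kk X = 0 ↔ X = ∅ := by
  constructor
  · intro h
    by_contra hne
    obtain ⟨e, he⟩ := Finset.nonempty_iff_ne_empty.mpr hne
    have : clusterOf X e ∈ clustersOf X := Finset.mem_image_of_mem _ he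
    simp [kk, Finset.card_eq_zero] at h
    rw [h] at this; exact absurd this (Finset.notMem_empty _)
  · rintro rfl; simp

theorem cluster_nonempty {X : Finset (Finset V)} {C : Finset (Finset V)}
    (hC : C ∈ clustersOf X) : C.Nonempty := by
  obtain ⟨e, he, rfl⟩ := Finset.mem_image.mp hC
  exact ⟨e, self_mem_clusterOf he⟩

theorem clusterOf_eq_of_mem {X : Finset (Finset V)} {e f : Finset V}
    (hf : f ∈ clusterOf X e) : clusterOf X e = clusterOf X f :=
  clusterOf_eq_of_reach (mem_clusterOf.mp hf).2

theorem cluster_eq_of_mem_clusters {X : Finset (Finset V)} {C : Finset (Finset V)}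
    (hC : C ∈ clustersOf X) {f : Finset V} (hf : f ∈ C) : C = clusterOf X f := by
  obtain ⟨e, he, rfl⟩ := Finset.mem_image.mp hC
  exact clusterOf_eq_of_mem hf

/-- Clusters are pairwise disjoint (equal or disjoint). -/
theorem clusters_eq_or_disjoint {X : Finset (Finset V)} {C D : Finset (Finset V)}
    (hC : C ∈ clustersOf X) (hD : D ∈ clustersOf X) :
    C = D ∨ ∀ f ∈ C, f ∉ D := by
  by_cases h : ∃ f, f ∈ C ∧ f ∈ D
  · obtain ⟨f, hfC, hfD⟩ := h
    left
    rw [cluster_eq_of_mem_clusters hC hfC, cluster_eq_of_mem_clusters hD hfD]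
  · right; intro f hf hfD; exact h ⟨f, hf, hfD⟩

/-- A step out of a member of a cluster stays in the cluster. -/
theorem step_mem_clusterOf {X : Finset (Finset V)} {e f g : Finset V}
    (hf : f ∈ clusterOf X e) (hstep : Step X f g) : g ∈ clusterOf X e := by
  rw [mem_clusterOf] at hf ⊢
  exact ⟨hstep.2.1, hf.2.tail hstep⟩

/-- Reachability in `X` between elements of a cluster can be realised inside the cluster. -/
theorem reach_clusterOf {X : Finset (Finset V)} {e f : Finset V} (he : e ∈ X)
    (h : Reach X e f) : Reach (clusterOf X e) e f := by
  induction h with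
  | refl => exact .rfl
  | @tail b c h1 h2 ih =>
    exact ih.tail ⟨mem_clusterOf.mpr ⟨h2.1, h1⟩, mem_clusterOf.mpr ⟨h2.2.1, h1.tail h2⟩, h2.2.2⟩

/-! ### The split lemma and the counting lemma -/

/-- Paths in `insert g Y` that avoid touching `g` give paths in `Y`. -/
theorem reach_of_reach_insert {Y : Finset (Finset V)} {g f h : Finset V}
    (hr : Reach (insert g Y) f h) (hf : f ∈ Y) (hg : g ∉ Y) (hh : h ∈ Y)
    (hng : ¬ Reach (insert g Y) f g) : Reach Y f h := by
  induction hr with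
  | refl => exact .rfl
  | @tail b c h1 h2 ih =>
    have hbne : b ≠ g := by
      rintro rfl
      exact hng h1
    have hb : b ∈ Y := by
      rcases Finset.mem_insert.mp h2.1 with h | h
      · exact absurd h hbne
      · exact h
    have hcne : c ≠ g := fun hc => hg (hc ▸ hh)
    have hc : c ∈ Y := by
      rcases Finset.mem_insert.mp h2.2.1 with h | h
      · exact absurd h hcne
      · exact h
    exact (ih hb).tail ⟨hb, hc, h2.2.2⟩

/-- If a `insert g Y`-path from `f ∈ Y` reaches `g`, then `f` reaches (inside `Y`)
some `f' ∈ Y` containing a vertex of `g`. -/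
theorem touch_of_reach_insert {Y : Finset (Finset V)} {g f : Finset V}
    (hr : Reach (insert g Y) f g) (hf : f ∈ Y) (hg : g ∉ Y) :
    ∃ x ∈ g, ∃ f' ∈ Y, x ∈ f' ∧ Reach Y f f' := by
  set TOUCH := ∃ x ∈ g, ∃ f' ∈ Y, x ∈ f' ∧ Reach Y f f' with hT
  suffices H : ∀ h, Reach (insert g Y) f h →
      ((h ≠ g → (Reach Y f h ∨ TOUCH)) ∧ (h = g → TOUCH)) by
    exact (H g hr).2 rfl
  intro h hr'
  induction hr' with
  | refl =>
    constructor
    · intro _; left; exact .rfl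
    · rintro rfl; exact absurd hf hg
  | @tail b c h1 h2 ih =>
    have hbY : b ≠ g → b ∈ Y := by
      intro hbne
      rcases Finset.mem_insert.mp h2.1 with h | h
      · exact absurd h hbne
      · exact h
    constructor
    · intro hcne
      have hcY : c ∈ Y := by
        rcases Finset.mem_insert.mp h2.2.1 with h | h
        · exact absurd h hcne
        · exact h
      by_cases hbne : b = g
      · right; exact (ih.2 hbne)
      · rcases ih.1 hbne with hrb | ht
        · left; exact hrb.tail ⟨hbY hbne, hcY, h2.2.2⟩
        · right; exact ht
    · intro hceq
      by_cases hbne : b = g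
      · exact ih.2 hbne
      · rcases ih.1 hbne with hrb | ht
        · obtain ⟨x, hxbc⟩ := h2.2.2
          rw [Finset.mem_inter] at hxbc
          exact ⟨x, hceq ▸ hxbc.2, b, hbY hbne, hxbc.1, hrb⟩
        · exact ht
open scoped Classical in
/-- Canonical image of a `Y`-cluster inside a larger edge set. -/
noncomputable def clusterExt (Y' : Finset (Finset V)) (C : Finset (Finset V)) :
    Finset (Finset V) :=
  Y'.filter (fun h => ∃ f ∈ C, Reach Y' f h)

theorem clusterExt_eq {Y Y' : Finset (Finset V)} (hYY' : Y ⊆ Y') {C : Finset (Finset V)}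
    (hC : C ∈ clustersOf Y) {f : Finset V} (hf : f ∈ C) :
    clusterExt Y' C = clusterOf Y' f := by
  classical
  have hfY : f ∈ Y := clusterOf_subset ((cluster_eq_of_mem_clusters hC hf) ▸ hf)
  ext h
  simp only [clusterExt, mem_clusterOf, Finset.mem_filter]
  constructor
  · rintro ⟨hh, f', hf', hr⟩
    have : Reach Y f f' := by
      rw [cluster_eq_of_mem_clusters hC hf] at hf'
      exact (mem_clusterOf.mp hf').2
    exact ⟨hh, (this.mono hYY').trans hr⟩
  · rintro ⟨hh, hr⟩
    exact ⟨hh, f, hf, hr⟩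

/-- Key split lemma: inserting one edge (with at most 2 vertices) into `Y` decreases
the number of clusters by at most 1. -/
theorem kk_le_kk_insert {Y : Finset (Finset V)} {g : Finset V} (hgcard : g.card ≤ 2) :
    kk Y ≤ kk (insert g Y) + 1 := by
  classical
  by_cases hg : g ∈ Y
  · rw [Finset.insert_eq_self.mpr hg]; omega
  set Y' := insert g Y with hY'
  have hYY' : Y ⊆ Y' := Finset.subset_insert _ _
  set A := (clustersOf Y).filter (fun C => ∃ f ∈ C, Reach Y' f g) with hA
  set B := (clustersOf Y).filter (fun C => ¬ ∃ f ∈ C, Reach Y' f g) with hB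
  have hpart : kk Y = A.card + B.card := by
    rw [kk, ← Finset.card_filter_add_card_filter_not
      (p := fun C => ∃ f ∈ C, Reach Y' f g)]
  have memY : ∀ {C : Finset (Finset V)}, C ∈ clustersOf Y → ∀ {f}, f ∈ C → f ∈ Y := by
    intro C hC f hf
    exact clusterOf_subset ((cluster_eq_of_mem_clusters hC hf) ▸ hf)
  -- A has at most card g ≤ 2 elements
  have hAcard : A.card ≤ 2 := by
    have hsub : A ⊆ g.biUnion (fun x => (Y.filter (x ∈ ·)).image (clusterOf Y)) := by
      intro C hC
      rw [hA, Finset.mem_filter] at hC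
      obtain ⟨hCc, f, hfC, hfg⟩ := hC
      obtain ⟨x, hxg, f', hf', hxf', hreach⟩ := touch_of_reach_insert hfg (memY hCc hfC) hg
      rw [Finset.mem_biUnion]
      refine ⟨x, hxg, Finset.mem_image.mpr ⟨f', Finset.mem_filter.mpr ⟨hf', hxf'⟩, ?_⟩⟩
      exact ((cluster_eq_of_mem_clusters hCc hfC).trans (clusterOf_eq_of_reach hreach)).symm
    calc A.card ≤ _ := Finset.card_le_card hsub
    _ ≤ ∑ x ∈ g, ((Y.filter (x ∈ ·)).image (clusterOf Y)).card := Finset.card_biUnion_le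
    _ ≤ ∑ _x ∈ g, 1 := by
        refine Finset.sum_le_sum ?_
        intro x _
        refine Finset.card_le_one.mpr ?_
        intro a ha b hb
        obtain ⟨fa, hfa, rfl⟩ := Finset.mem_image.mp ha
        obtain ⟨fb, hfb, rfl⟩ := Finset.mem_image.mp hb
        rw [Finset.mem_filter] at hfa hfb
        refine clusterOf_eq_of_reach (Reach.single ⟨hfa.1, hfb.1, ⟨x, ?_⟩⟩)
        rw [Finset.mem_inter]; exact ⟨hfa.2, hfb.2⟩
    _ ≤ 2 := by simpa using hgcard
  -- B maps injectively into clusters of Y' avoiding the cluster of g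
  have hψ : ∀ C ∈ B, ∀ f ∈ C, clusterExt Y' C = clusterOf Y' f := by
    intro C hC f hf
    exact clusterExt_eq hYY' (Finset.mem_filter.mp hC).1 hf
  have hBinj : Set.InjOn (clusterExt Y') B := by
    intro C1 h1 C2 h2 heq
    obtain ⟨f1, hf1⟩ := cluster_nonempty (Finset.mem_filter.mp h1).1
    obtain ⟨f2, hf2⟩ := cluster_nonempty (Finset.mem_filter.mp h2).1
    have e1 := hψ C1 h1 f1 hf1
    have e2 := hψ C2 h2 f2 hf2
    have hr' : Reach Y' f1 f2 := by
      have : f2 ∈ clusterOf Y' f1 := by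
        rw [← e1, heq, e2]
        exact self_mem_clusterOf (hYY' (memY (Finset.mem_filter.mp h2).1 hf2))
      exact (mem_clusterOf.mp this).2
    have hnr : ¬ Reach Y' f1 g := by
      intro hr
      exact (Finset.mem_filter.mp h1).2 ⟨f1, hf1, hr⟩
    have hr : Reach Y f1 f2 := reach_of_reach_insert hr'
      (memY (Finset.mem_filter.mp h1).1 hf1) hg (memY (Finset.mem_filter.mp h2).1 hf2) hnr
    rw [cluster_eq_of_mem_clusters (Finset.mem_filter.mp h1).1 hf1,
      cluster_eq_of_mem_clusters (Finset.mem_filter.mp h2).1 hf2]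
    exact clusterOf_eq_of_reach hr
  have hBsub : B.image (clusterExt Y') ⊆ (clustersOf Y').erase (clusterOf Y' g) := by
    intro D hD
    obtain ⟨C, hC, rfl⟩ := Finset.mem_image.mp hD
    obtain ⟨f, hf⟩ := cluster_nonempty (Finset.mem_filter.mp hC).1
    rw [hψ C hC f hf]
    refine Finset.mem_erase.mpr ⟨?_, Finset.mem_image_of_mem _ (hYY' (memY (Finset.mem_filter.mp hC).1 hf))⟩
    intro heq
    have : g ∈ clusterOf Y' f := heq ▸ self_mem_clusterOf (Finset.mem_insert_self _ _)
    exact (Finset.mem_filter.mp hC).2 ⟨f, hf, ((mem_clusterOf.mp this).2)⟩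
  have hBcard : B.card ≤ kk Y' - 1 := by
    have hgY' : clusterOf Y' g ∈ clustersOf Y' :=
      Finset.mem_image_of_mem _ (Finset.mem_insert_self _ _)
    have h1 : B.card = (B.image (clusterExt Y')).card := (Finset.card_image_of_injOn hBinj).symm
    have h2 : ((clustersOf Y').erase (clusterOf Y' g)).card = (clustersOf Y').card - 1 :=
      Finset.card_erase_of_mem hgY'
    have h3 := Finset.card_le_card hBsub
    unfold kk
    omega
  have hkkY' : 1 ≤ kk Y' := by
    have : clusterOf Y' g ∈ clustersOf Y' := Finset.mem_image_of_mem _ (Finset.mem_insert_self _ _)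
    exact Finset.card_pos.mpr ⟨_, this⟩
  omega

/-- Generalized counting lemma: the number of clusters of a subset `Y ⊆ X` exceeds
that of `X` by at most `|X \ Y|`. -/
theorem kk_le_card_sdiff_add_kk {X : Finset (Finset V)} (hcard : ∀ e ∈ X, e.card = 2) :
    ∀ (n : ℕ) (Y : Finset (Finset V)), Y ⊆ X → (X \ Y).card = n → kk Y ≤ n + kk X := by
  intro n
  induction n with
  | zero =>
    intro Y hYX h0
    have hxy : X \ Y = ∅ := Finset.card_eq_zero.mp h0
    have : Y = X := Finset.Subset.antisymm hYX (fun e he => by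
      by_contra hne
      exact absurd (Finset.mem_sdiff.mpr ⟨he, hne⟩) (by simp [hxy]))
    subst this; omega
  | succ n ih =>
    intro Y hYX hn
    have hne : (X \ Y).Nonempty := Finset.card_pos.mp (by omega)
    obtain ⟨g, hgXY⟩ := hne
    rw [Finset.mem_sdiff] at hgXY
    have hins : insert g Y ⊆ X := Finset.insert_subset hgXY.1 hYX
    have hcard' : (X \ insert g Y).card = n := by
      have : X \ insert g Y = (X \ Y).erase g := by
        ext e
        simp only [Finset.mem_sdiff, Finset.mem_erase, Finset.mem_insert, not_or]
        tauto
      rw [this, Finset.card_erase_of_mem (Finset.mem_sdiff.mpr hgXY), hn]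
      omega
    have h1 := kk_le_kk_insert (Y := Y) (g := g) (le_of_eq (hcard g hgXY.1))
    have h2 := ih (insert g Y) hins hcard'
    omega
/-! ### Additivity of cluster counts over non-adjacent unions -/

theorem reach_union_left {Y1 Y2 : Finset (Finset V)}
    (hnoadj : ∀ e ∈ Y1, ∀ f ∈ Y2, ¬ (e ∩ f).Nonempty) {e f : Finset V}
    (hr : Reach (Y1 ∪ Y2) e f) (he : e ∈ Y1) : Reach Y1 e f := by
  induction hr with
  | refl => exact .rfl
  | @tail b c h1 h2 ih =>
    have hb : b ∈ Y1 := by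
      by_cases heb : e = b
      · exact heb ▸ he
      · exact ih.mem_right heb
    have hc : c ∈ Y1 := by
      rcases Finset.mem_union.mp h2.2.1 with h | h
      · exact h
      · exact absurd h2.2.2 (hnoadj b hb c h)
    exact ih.tail ⟨hb, hc, h2.2.2⟩

theorem clusterOf_union_left {Y1 Y2 : Finset (Finset V)}
    (hnoadj : ∀ e ∈ Y1, ∀ f ∈ Y2, ¬ (e ∩ f).Nonempty) {e : Finset V} (he : e ∈ Y1) :
    clusterOf (Y1 ∪ Y2) e = clusterOf Y1 e := by
  ext f
  simp only [mem_clusterOf, Finset.mem_union]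
  constructor
  · rintro ⟨hf, hr⟩
    have hrY1 := reach_union_left hnoadj hr he
    have hf1 : f ∈ Y1 := by
      by_cases hef : e = f
      · exact hef ▸ he
      · exact hrY1.mem_right hef
    exact ⟨hf1, hrY1⟩
  · rintro ⟨hf, hr⟩
    exact ⟨Or.inl hf, hr.mono Finset.subset_union_left⟩

theorem hnoadj_symm {Y1 Y2 : Finset (Finset V)}
    (hnoadj : ∀ e ∈ Y1, ∀ f ∈ Y2, ¬ (e ∩ f).Nonempty) :
    ∀ e ∈ Y2, ∀ f ∈ Y1, ¬ (e ∩ f).Nonempty := by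
  intro e he f hf hne
  exact hnoadj f hf e he (by rwa [Finset.inter_comm])

theorem clustersOf_union {Y1 Y2 : Finset (Finset V)}
    (hnoadj : ∀ e ∈ Y1, ∀ f ∈ Y2, ¬ (e ∩ f).Nonempty) :
    clustersOf (Y1 ∪ Y2) = clustersOf Y1 ∪ clustersOf Y2 := by
  have hcomm : Y1 ∪ Y2 = Y2 ∪ Y1 := Finset.union_comm _ _
  ext C
  simp only [clustersOf, Finset.mem_image, Finset.mem_union]
  constructor
  · rintro ⟨e, he, rfl⟩
    rcases he with h | h
    · exact Or.inl ⟨e, h, (clusterOf_union_left hnoadj h).symm⟩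
    · refine Or.inr ⟨e, h, ?_⟩
      rw [hcomm]
      exact (clusterOf_union_left (hnoadj_symm hnoadj) h).symm
  · rintro (⟨e, he, rfl⟩ | ⟨e, he, rfl⟩)
    · exact ⟨e, Or.inl he, clusterOf_union_left hnoadj he⟩
    · refine ⟨e, Or.inr he, ?_⟩
      rw [hcomm]
      exact clusterOf_union_left (hnoadj_symm hnoadj) he

theorem kk_union {Y1 Y2 : Finset (Finset V)} (hdisj : Disjoint Y1 Y2)
    (hnoadj : ∀ e ∈ Y1, ∀ f ∈ Y2, ¬ (e ∩ f).Nonempty) :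
    kk (Y1 ∪ Y2) = kk Y1 + kk Y2 := by
  rw [kk, clustersOf_union hnoadj]
  rw [Finset.card_union_of_disjoint]
  · rfl
  · rw [Finset.disjoint_left]
    intro C hC1 hC2
    obtain ⟨e, he⟩ := cluster_nonempty hC1
    have he1 : e ∈ Y1 := clusterOf_subset ((cluster_eq_of_mem_clusters hC1 he) ▸ he)
    have he2 : e ∈ Y2 := clusterOf_subset ((cluster_eq_of_mem_clusters hC2 he) ▸ he)
    exact (Finset.disjoint_left.mp hdisj) he1 he2

/-- Each cluster, as its own ambient set, has exactly one cluster. -/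
theorem kk_cluster_eq_one {X : Finset (Finset V)} {C : Finset (Finset V)}
    (hC : C ∈ clustersOf X) : kk C = 1 := by
  obtain ⟨e₀, he₀, rfl⟩ := Finset.mem_image.mp hC
  have key : ∀ f ∈ clusterOf X e₀, clusterOf (clusterOf X e₀) f = clusterOf X e₀ := by
    intro f hf
    apply Finset.Subset.antisymm clusterOf_subset
    intro g hg
    have hrf : Reach X e₀ f := (mem_clusterOf.mp hf).2
    have hrg : Reach X e₀ g := (mem_clusterOf.mp hg).2
    have hrfg : Reach X f g := hrf.symm.trans hrg
    have hff : f ∈ X := (mem_clusterOf.mp hf).1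
    have := reach_clusterOf hff hrfg
    rw [mem_clusterOf]
    refine ⟨hg, ?_⟩
    have hcc : clusterOf X f = clusterOf X e₀ := (clusterOf_eq_of_reach hrf).symm
    rw [hcc] at this
    exact this
  rw [kk, clustersOf, Finset.card_eq_one]
  refine ⟨clusterOf X e₀, ?_⟩
  ext D
  simp only [Finset.mem_image, Finset.mem_singleton]
  constructor
  · rintro ⟨f, hf, rfl⟩; exact key f hf
  · rintro rfl; exact ⟨e₀, self_mem_clusterOf he₀, key e₀ (self_mem_clusterOf he₀)⟩

/-- No adjacency between a full cluster and the rest. -/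
theorem cluster_no_cross {X : Finset (Finset V)} {e₀ : Finset V} {e f : Finset V}
    (he : e ∈ clusterOf X e₀) (hf : f ∈ X \ clusterOf X e₀) : ¬ (e ∩ f).Nonempty := by
  intro hne
  rw [Finset.mem_sdiff] at hf
  exact hf.2 (step_mem_clusterOf he ⟨(mem_clusterOf.mp he).1, hf.1, hne⟩)

theorem kk_le_one_of_conn {X : Finset (Finset V)}
    (hconn : ∀ e ∈ X, ∀ f ∈ X, Reach X e f) : kk X ≤ 1 := by
  rw [kk, clustersOf]
  refine Finset.card_le_one.mpr ?_
  intro a ha b hb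
  obtain ⟨e, he, rfl⟩ := Finset.mem_image.mp ha
  obtain ⟨f, hf, rfl⟩ := Finset.mem_image.mp hb
  exact clusterOf_eq_of_reach (hconn e he f hf)
/-! ### The taut-cluster refined counting bound -/

theorem clustersOf_cluster {X : Finset (Finset V)} {C : Finset (Finset V)}
    (hC : C ∈ clustersOf X) : clustersOf C = {C} := by
  obtain ⟨e₀, he₀, rfl⟩ := Finset.mem_image.mp hC
  have key : ∀ f ∈ clusterOf X e₀, clusterOf (clusterOf X e₀) f = clusterOf X e₀ := by
    intro f hf
    apply Finset.Subset.antisymm clusterOf_subset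
    intro g hg
    have hrf : Reach X e₀ f := (mem_clusterOf.mp hf).2
    have hrg : Reach X e₀ g := (mem_clusterOf.mp hg).2
    have hrfg : Reach X f g := hrf.symm.trans hrg
    have hff : f ∈ X := (mem_clusterOf.mp hf).1
    have := reach_clusterOf hff hrfg
    rw [mem_clusterOf]
    refine ⟨hg, ?_⟩
    have hcc : clusterOf X f = clusterOf X e₀ := (clusterOf_eq_of_reach hrf).symm
    rw [hcc] at this
    exact this
  ext D
  simp only [Finset.mem_image, Finset.mem_singleton, clustersOf]
  constructor
  · rintro ⟨f, hf, rfl⟩; exact key f hf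
  · rintro rfl; exact ⟨e₀, self_mem_clusterOf he₀, key e₀ (self_mem_clusterOf he₀)⟩

open scoped Classical in
/-- Clusters of the ambient set `X` on which the counting inequality for `Y` is tight. -/
noncomputable def tautSet (X Y : Finset (Finset V)) : Finset (Finset (Finset V)) :=
  (clustersOf X).filter (fun C => ¬ (kk (Y ∩ C) ≤ (C \ Y).card))

theorem kk_le_taut_aux : ∀ (N : ℕ) (X : Finset (Finset V)), X.card ≤ N →
    (∀ e ∈ X, e.card = 2) → ∀ Y, Y ⊆ X →
    kk Y ≤ (X \ Y).card + (tautSet X Y).card := by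
  intro N
  induction N with
  | zero =>
    intro X hX _ Y hYX
    have hX0 : X = ∅ := Finset.card_eq_zero.mp (Nat.le_zero.mp hX)
    subst hX0
    have : Y = ∅ := Finset.subset_empty.mp hYX
    subst this
    simp
  | succ N ih =>
    intro X hX hcard Y hYX
    rcases Finset.eq_empty_or_nonempty X with rfl | ⟨e₀, he₀⟩
    · have : Y = ∅ := Finset.subset_empty.mp hYX
      subst this; simp
    set C := clusterOf X e₀ with hCdef
    have hCclusters : C ∈ clustersOf X := Finset.mem_image_of_mem _ he₀
    have hCX : C ⊆ X := clusterOf_subset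
    have hCne : C.Nonempty := ⟨e₀, self_mem_clusterOf he₀⟩
    set X' := X \ C with hX'def
    set Y' := Y \ C with hY'def
    have hY'X' : Y' ⊆ X' := by
      intro e he
      rw [Finset.mem_sdiff] at he ⊢
      exact ⟨hYX he.1, he.2⟩
    have hnoadjC : ∀ e ∈ C, ∀ f ∈ X', ¬ (e ∩ f).Nonempty := fun e he f hf =>
      cluster_no_cross he hf
    have hnoadjY : ∀ e ∈ Y ∩ C, ∀ f ∈ Y', ¬ (e ∩ f).Nonempty := by
      intro e he f hf
      exact hnoadjC e (Finset.mem_inter.mp he).2 f (hY'X' hf)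
    -- split kk Y
    have hYsplit : (Y ∩ C) ∪ Y' = Y := by
      ext x
      simp only [Finset.mem_union, Finset.mem_inter, Finset.mem_sdiff, hY'def]
      tauto
    have hdisjY : Disjoint (Y ∩ C) Y' := by
      rw [Finset.disjoint_left]
      intro e he hf
      exact (Finset.mem_sdiff.mp hf).2 (Finset.mem_inter.mp he).2
    have hkkY : kk Y = kk (Y ∩ C) + kk Y' := by
      have := kk_union hdisjY hnoadjY
      rwa [hYsplit] at this
    -- clusters of X'
    have hXsplit : C ∪ X' = X := Finset.union_sdiff_of_subset hCX
    have hclX : clustersOf X = clustersOf C ∪ clustersOf X' := by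
      rw [← hXsplit]; exact clustersOf_union hnoadjC
    have hclC : clustersOf C = {C} := clustersOf_cluster hCclusters
    have hCnotin : C ∉ clustersOf X' := by
      intro h
      obtain ⟨f, hf⟩ := hCne
      have hsub : C ⊆ X' := by
        obtain ⟨e, he, heq⟩ := Finset.mem_image.mp h
        rw [← heq]
        exact clusterOf_subset
      exact (Finset.mem_sdiff.mp (hsub hf)).2 hf
    have hclX' : clustersOf X' = (clustersOf X).erase C := by
      rw [hclX, hclC]
      ext D
      simp only [Finset.mem_erase, Finset.mem_union, Finset.mem_singleton]
      constructor
      · intro hD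
        exact ⟨fun h => hCnotin (h ▸ hD), Or.inr hD⟩
      · rintro ⟨hne, (h | h)⟩
        · exact absurd h hne
        · exact h
    -- taut flags transfer
    have hflag : ∀ D ∈ clustersOf X', (Y' ∩ D = Y ∩ D ∧ D \ Y' = D \ Y) := by
      intro D hD
      have hDX' : D ⊆ X' := by
        obtain ⟨e, he, rfl⟩ := Finset.mem_image.mp hD
        exact clusterOf_subset
      constructor
      · ext x
        by_cases hxD : x ∈ D
        · have hxC : x ∉ C := (Finset.mem_sdiff.mp (hDX' hxD)).2
          simp only [Finset.mem_inter, Finset.mem_sdiff, hY'def, hxD]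
          tauto
        · simp [Finset.mem_inter, hxD]
      · ext x
        by_cases hxD : x ∈ D
        · have hxC : x ∉ C := (Finset.mem_sdiff.mp (hDX' hxD)).2
          simp only [Finset.mem_sdiff, hY'def, hxD]
          tauto
        · simp [Finset.mem_sdiff, hxD]
    have htautX' : tautSet X' Y' = (tautSet X Y).erase C := by
      unfold tautSet
      rw [hclX']
      ext D
      simp only [Finset.mem_filter, Finset.mem_erase]
      constructor
      · rintro ⟨⟨hne, hmem⟩, hflagD⟩
        refine ⟨hne, hmem, ?_⟩
        have := hflag D (by rw [hclX']; exact Finset.mem_erase.mpr ⟨hne, hmem⟩)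
        rwa [this.1, this.2] at hflagD
      · rintro ⟨hne, hmem, hflagD⟩
        refine ⟨⟨hne, hmem⟩, ?_⟩
        have := hflag D (by rw [hclX']; exact Finset.mem_erase.mpr ⟨hne, hmem⟩)
        rwa [this.1, this.2]
    -- bound kk (Y ∩ C)
    have hCsd : C \ (Y ∩ C) = C \ Y := by
      ext x
      simp only [Finset.mem_sdiff, Finset.mem_inter]
      tauto
    have hbound1 : kk (Y ∩ C) ≤ (C \ Y).card +
        (if C ∈ tautSet X Y then 1 else 0) := by
      by_cases ht : C ∈ tautSet X Y
      · rw [if_pos ht]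
        have hkkC : kk C = 1 := by rw [kk, hclC]; simp
        have := kk_le_card_sdiff_add_kk (X := C) (fun e he => hcard e (hCX he))
          ((C \ (Y ∩ C)).card) (Y ∩ C) Finset.inter_subset_right rfl
        rw [hCsd, hkkC] at this
        omega
      · rw [if_neg ht]
        unfold tautSet at ht
        simp only [Finset.mem_filter, not_and, not_not] at ht
        exact ht hCclusters
    -- IH
    have hX'card : X'.card ≤ N := by
      have h1 : X'.card < X.card := Finset.card_lt_card (Finset.sdiff_ssubset hCX hCne)
      omega
    have hIH := ih X' hX'card (fun e he => hcard e (Finset.mem_sdiff.mp he).1) Y' hY'X'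
    -- cards of sdiffs add up
    have hsd : (X \ Y).card = (C \ Y).card + (X' \ Y').card := by
      have hX'Y' : X' \ Y' = X' \ Y := by
        ext x
        by_cases hx : x ∈ X'
        · have hxC : x ∉ C := (Finset.mem_sdiff.mp hx).2
          simp only [Finset.mem_sdiff, hY'def, hx]
          tauto
        · simp [Finset.mem_sdiff, hx]
      have hun : X \ Y = (C \ Y) ∪ (X' \ Y) := by
        ext x
        simp only [Finset.mem_sdiff, Finset.mem_union, hX'def]
        constructor
        · rintro ⟨h1, h2⟩
          by_cases hc : x ∈ C
          · exact Or.inl ⟨hc, h2⟩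
          · exact Or.inr ⟨⟨h1, hc⟩, h2⟩
        · rintro (⟨h1, h2⟩ | ⟨⟨h1, _⟩, h2⟩)
          · exact ⟨hCX h1, h2⟩
          · exact ⟨h1, h2⟩
      have hdisj2 : Disjoint (C \ Y) (X' \ Y) := by
        rw [Finset.disjoint_left]
        intro x h1 h2
        exact (Finset.mem_sdiff.mp (Finset.mem_sdiff.mp h2).1).2 (Finset.mem_sdiff.mp h1).1
      rw [hun, Finset.card_union_of_disjoint hdisj2, hX'Y']
    -- taut cards add up
    have htc : (tautSet X Y).card = (tautSet X' Y').card +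
        (if C ∈ tautSet X Y then 1 else 0) := by
      rw [htautX']
      by_cases ht : C ∈ tautSet X Y
      · rw [if_pos ht, Finset.card_erase_of_mem ht]
        have : 1 ≤ (tautSet X Y).card := Finset.card_pos.mpr ⟨C, ht⟩
        omega
      · rw [if_neg ht, Finset.erase_eq_of_notMem ht]
        omega
    omega

theorem kk_le_taut {X Y : Finset (Finset V)} (hcard : ∀ e ∈ X, e.card = 2) (hYX : Y ⊆ X) :
    kk Y ≤ (X \ Y).card + (tautSet X Y).card :=
  kk_le_taut_aux X.card X le_rfl hcard Y hYX
/-! ### Families of triangles -/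

/-- The edges (2-element subsets) of a triangle `t`. -/
def edgesOf (t : Finset V) : Finset (Finset V) := Finset.powersetCard 2 t

theorem mem_edgesOf {t e : Finset V} : e ∈ edgesOf t ↔ e ⊆ t ∧ e.card = 2 := by
  simp [edgesOf, Finset.mem_powersetCard]

/-- The edge set of a family of triangles. -/
def EE (A : Finset (Finset V)) : Finset (Finset V) := A.biUnion edgesOf

theorem mem_EE {A : Finset (Finset V)} {e : Finset V} :
    e ∈ EE A ↔ ∃ t ∈ A, e ⊆ t ∧ e.card = 2 := by
  simp [EE, mem_edgesOf]

theorem EE_card2 {A : Finset (Finset V)} {e : Finset V} (he : e ∈ EE A) : e.card = 2 :=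
  (mem_EE.mp he).choose_spec.2.2

theorem EE_mono {A B : Finset (Finset V)} (h : A ⊆ B) : EE A ⊆ EE B := by
  intro e he
  rw [mem_EE] at he ⊢
  obtain ⟨t, ht, h1, h2⟩ := he
  exact ⟨t, h ht, h1, h2⟩

theorem edgesOf_subset_EE {A : Finset (Finset V)} {t : Finset V} (ht : t ∈ A) :
    edgesOf t ⊆ EE A := fun e he => Finset.mem_biUnion.mpr ⟨t, ht, he⟩

/-- Two edges of a 3-set intersect. -/
theorem edges_intersect {t e f : Finset V} (ht : t.card = 3)
    (he : e ∈ edgesOf t) (hf : f ∈ edgesOf t) : (e ∩ f).Nonempty := by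
  rw [mem_edgesOf] at he hf
  by_contra hcon
  rw [Finset.not_nonempty_iff_eq_empty] at hcon
  have hdisj : Disjoint e f := Finset.disjoint_iff_inter_eq_empty.mpr hcon
  have hsub : e ∪ f ⊆ t := Finset.union_subset he.1 hf.1
  have := Finset.card_le_card hsub
  rw [Finset.card_union_of_disjoint hdisj, he.2, hf.2, ht] at this
  omega

theorem edgesOf_card {t : Finset V} (ht : t.card = 3) : (edgesOf t).card = 3 := by
  rw [edgesOf, Finset.card_powersetCard, ht]
  rfl

/-- Any three distinct elements of `t` with `t.card = 3`, and pair-edges. -/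
theorem pair_mem_edgesOf {t : Finset V} {x y : V} (hx : x ∈ t) (hy : y ∈ t) (hxy : x ≠ y) :
    ({x, y} : Finset V) ∈ edgesOf t := by
  rw [mem_edgesOf]
  refine ⟨Finset.insert_subset hx (Finset.singleton_subset_iff.mpr hy), ?_⟩
  rw [Finset.card_insert_of_notMem (by simp [hxy]), Finset.card_singleton]

theorem erase_mem_edgesOf {t : Finset V} {v : V} (ht : t.card = 3) (hv : v ∈ t) :
    t.erase v ∈ edgesOf t := by
  rw [mem_edgesOf]
  exact ⟨Finset.erase_subset _ _, by rw [Finset.card_erase_of_mem hv, ht]⟩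

/-- The star of a vertex in an edge set. -/
def starOf (X : Finset (Finset V)) (v : V) : Finset (Finset V) := X.filter (fun e => v ∈ e)

theorem mem_starOf {X : Finset (Finset V)} {v : V} {e : Finset V} :
    e ∈ starOf X v ↔ e ∈ X ∧ v ∈ e := by simp [starOf]

theorem starOf_subset {X : Finset (Finset V)} {v : V} : starOf X v ⊆ X :=
  Finset.filter_subset _ _

theorem star_edges_intersect {X : Finset (Finset V)} {v : V} {e f : Finset V}
    (he : e ∈ starOf X v) (hf : f ∈ starOf X v) : (e ∩ f).Nonempty :=
  ⟨v, Finset.mem_inter.mpr ⟨(mem_starOf.mp he).2, (mem_starOf.mp hf).2⟩⟩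

/-- Survivors of a family after removing a set `U` of red edges. -/
def survivors (A U : Finset (Finset V)) : Finset (Finset V) :=
  A.filter (fun t => ∀ e ∈ U, ¬ e ⊆ t)

theorem survivors_subset {A U : Finset (Finset V)} : survivors A U ⊆ A :=
  Finset.filter_subset _ _

theorem mem_survivors {A U : Finset (Finset V)} {t : Finset V} :
    t ∈ survivors A U ↔ t ∈ A ∧ ∀ e ∈ U, ¬ e ⊆ t := by simp [survivors]

/-- Survivors of a star are exactly the triangles avoiding `v`. -/
theorem survivors_star {A : Finset (Finset V)} (h3 : ∀ t ∈ A, t.card = 3) (v : V) :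
    survivors A (starOf (EE A) v) = A.filter (fun t => v ∉ t) := by
  ext t
  simp only [mem_survivors, Finset.mem_filter]
  constructor
  · rintro ⟨ht, hU⟩
    refine ⟨ht, fun hv => ?_⟩
    have h2 : (t.erase v) ⊆ t := Finset.erase_subset _ _
    obtain ⟨x, hx⟩ : (t.erase v).Nonempty := by
      rw [← Finset.card_pos, Finset.card_erase_of_mem hv, h3 t ht]
      omega
    have hxt : x ∈ t := h2 hx
    have hxv : x ≠ v := Finset.ne_of_mem_erase hx
    have hpair : ({v, x} : Finset V) ∈ edgesOf t := pair_mem_edgesOf hv hxt (Ne.symm hxv)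
    have hstar : ({v, x} : Finset V) ∈ starOf (EE A) v :=
      mem_starOf.mpr ⟨edgesOf_subset_EE ht hpair, Finset.mem_insert_self _ _⟩
    exact hU _ hstar (mem_edgesOf.mp hpair).1
  · rintro ⟨ht, hv⟩
    refine ⟨ht, fun e he hsub => ?_⟩
    exact hv (hsub (mem_starOf.mp he).2)
/-! ### Classification in the subcubic case -/

theorem card_ge_four {α : Type*} [DecidableEq α] {s : Finset α} {a b c d : α}
    (ha : a ∈ s) (hb : b ∈ s) (hc : c ∈ s) (hd : d ∈ s)
    (hab : a ≠ b) (hac : a ≠ c) (had : a ≠ d) (hbc : b ≠ c) (hbd : b ≠ d) (hcd : c ≠ d) :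
    4 ≤ s.card := by
  have hsub : ({a, b, c, d} : Finset α) ⊆ s := by
    intro x hx
    simp only [Finset.mem_insert, Finset.mem_singleton] at hx
    rcases hx with rfl | rfl | rfl | rfl <;> assumption
  have hcard : ({a, b, c, d} : Finset α).card = 4 := by
    rw [Finset.card_insert_of_notMem (by simp [hab, hac, had]),
        Finset.card_insert_of_notMem (by simp [hbc, hbd]),
        Finset.card_insert_of_notMem (by simp [hcd]), Finset.card_singleton]
  have := Finset.card_le_card hsub
  omega

theorem pair_ne {x a b : V} (hax : a ≠ x) (hab : a ≠ b) :
    ({x, a} : Finset V) ≠ {x, b} := by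
  intro h
  have : a ∈ ({x, b} : Finset V) := h ▸ (by simp)
  simp only [Finset.mem_insert, Finset.mem_singleton] at this
  tauto

/-- In a subcubic family, two distinct intersecting triangles share an edge. -/
theorem share_edge {A : Finset (Finset V)} (h3 : ∀ t ∈ A, t.card = 3)
    (hsub3 : ∀ v, (starOf (EE A) v).card ≤ 3)
    {t t' : Finset V} (ht : t ∈ A) (ht' : t' ∈ A) (hne : t ≠ t')
    (hint : (t ∩ t').Nonempty) : ∃ e, e ∈ edgesOf t ∧ e ∈ edgesOf t' := by
  have hc3 : (t ∩ t').card ≤ 3 := le_trans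
    (Finset.card_le_card Finset.inter_subset_left) (le_of_eq (h3 t ht))
  have hc1 : 1 ≤ (t ∩ t').card := Finset.card_pos.mpr hint
  -- rule out card = 3
  have hc3' : (t ∩ t').card ≠ 3 := by
    intro h
    have heq : t ∩ t' = t := Finset.eq_of_subset_of_card_le Finset.inter_subset_left
      (by rw [h, h3 t ht])
    have hsub : t ⊆ t' := by
      intro z hz
      have hz' : z ∈ t ∩ t' := by rw [heq]; exact hz
      exact (Finset.mem_inter.mp hz').2
    exact hne (Finset.eq_of_subset_of_card_le hsub (by rw [h3 t ht, h3 t' ht']))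
  -- rule out card = 1
  have hc1' : (t ∩ t').card ≠ 1 := by
    intro h
    obtain ⟨x, hx⟩ := Finset.card_eq_one.mp h
    have hxt : x ∈ t := Finset.inter_subset_left (hx ▸ Finset.mem_singleton_self x)
    have hxt' : x ∈ t' := Finset.inter_subset_right (hx ▸ Finset.mem_singleton_self x)
    obtain ⟨a, b, hab, habeq⟩ := Finset.card_eq_two.mp
      (by rw [Finset.card_erase_of_mem hxt, h3 t ht] : (t.erase x).card = 2)
    obtain ⟨c, d, hcd, hcdeq⟩ := Finset.card_eq_two.mp
      (by rw [Finset.card_erase_of_mem hxt', h3 t' ht'] : (t'.erase x).card = 2)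
    have hat : a ∈ t := (Finset.erase_subset _ _) (habeq ▸ (by simp : a ∈ ({a,b} : Finset V)))
    have hbt : b ∈ t := (Finset.erase_subset _ _) (habeq ▸ (by simp : b ∈ ({a,b} : Finset V)))
    have hct : c ∈ t' := (Finset.erase_subset _ _) (hcdeq ▸ (by simp : c ∈ ({c,d} : Finset V)))
    have hdt : d ∈ t' := (Finset.erase_subset _ _) (hcdeq ▸ (by simp : d ∈ ({c,d} : Finset V)))
    have hax : a ≠ x := Finset.ne_of_mem_erase (habeq ▸ (by simp : a ∈ ({a,b} : Finset V)))
    have hbx : b ≠ x := Finset.ne_of_mem_erase (habeq ▸ (by simp : b ∈ ({a,b} : Finset V)))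
    have hcx : c ≠ x := Finset.ne_of_mem_erase (hcdeq ▸ (by simp : c ∈ ({c,d} : Finset V)))
    have hdx : d ≠ x := Finset.ne_of_mem_erase (hcdeq ▸ (by simp : d ∈ ({c,d} : Finset V)))
    have hnotin : ∀ z, z ∈ t → z ∈ t' → z = x := by
      intro z hz hz'
      have : z ∈ t ∩ t' := Finset.mem_inter.mpr ⟨hz, hz'⟩
      rw [hx] at this
      exact Finset.mem_singleton.mp this
    have hac : a ≠ c := fun h => hax (hnotin a hat (h ▸ hct))
    have had : a ≠ d := fun h => hax (hnotin a hat (h ▸ hdt))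
    have hbc : b ≠ c := fun h => hbx (hnotin b hbt (h ▸ hct))
    have hbd : b ≠ d := fun h => hbx (hnotin b hbt (h ▸ hdt))
    have e1 : ({x, a} : Finset V) ∈ starOf (EE A) x := mem_starOf.mpr
      ⟨edgesOf_subset_EE ht (pair_mem_edgesOf hxt hat (Ne.symm hax)), by simp⟩
    have e2 : ({x, b} : Finset V) ∈ starOf (EE A) x := mem_starOf.mpr
      ⟨edgesOf_subset_EE ht (pair_mem_edgesOf hxt hbt (Ne.symm hbx)), by simp⟩
    have e3 : ({x, c} : Finset V) ∈ starOf (EE A) x := mem_starOf.mpr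
      ⟨edgesOf_subset_EE ht' (pair_mem_edgesOf hxt' hct (Ne.symm hcx)), by simp⟩
    have e4 : ({x, d} : Finset V) ∈ starOf (EE A) x := mem_starOf.mpr
      ⟨edgesOf_subset_EE ht' (pair_mem_edgesOf hxt' hdt (Ne.symm hdx)), by simp⟩
    have hge := card_ge_four e1 e2 e3 e4 (pair_ne hax hab) (pair_ne hax hac)
      (pair_ne hax had) (pair_ne hbx hbc) (pair_ne hbx hbd) (pair_ne hcx hcd)
    have := hsub3 x
    omega
  -- so card = 2
  have hc2 : (t ∩ t').card = 2 := by omega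
  exact ⟨t ∩ t', mem_edgesOf.mpr ⟨Finset.inter_subset_left, hc2⟩,
    mem_edgesOf.mpr ⟨Finset.inter_subset_right, hc2⟩⟩

/-- Edges reachable from an edge inside `K` remain inside `K`, provided edges touching `K`
lie inside `K`. -/
theorem reach_closure {A : Finset (Finset V)} {K : Finset V}
    (hedge : ∀ g ∈ EE A, (g ∩ K).Nonempty → g ⊆ K)
    {g h : Finset V} (hr : Reach (EE A) g h) (hgK : g ⊆ K) : h ⊆ K := by
  induction hr with
  | refl => exact hgK
  | @tail b c h1 h2 ih =>
    obtain ⟨z, hz⟩ := h2.2.2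
    rw [Finset.mem_inter] at hz
    exact hedge c h2.2.1 ⟨z, Finset.mem_inter.mpr ⟨hz.2, ih hz.1⟩⟩

/-- The third vertex of a triangle over one of its edges. -/
theorem third_vertex {t e : Finset V} (ht : t.card = 3) (he : e ∈ edgesOf t) :
    ∃ z, z ∈ t ∧ z ∉ e ∧ t = insert z e := by
  rw [mem_edgesOf] at he
  have hcard : (t \ e).card = 1 := by
    rw [Finset.card_sdiff_of_subset he.1, ht, he.2]
  obtain ⟨z, hz⟩ := Finset.card_eq_one.mp hcard
  have hzt : z ∈ t \ e := hz ▸ Finset.mem_singleton_self z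
  rw [Finset.mem_sdiff] at hzt
  refine ⟨z, hzt.1, hzt.2, ?_⟩
  apply Finset.Subset.antisymm
  · intro w hw
    by_cases hwe : w ∈ e
    · exact Finset.mem_insert_of_mem hwe
    · have : w ∈ t \ e := Finset.mem_sdiff.mpr ⟨hw, hwe⟩
      rw [hz] at this
      exact Finset.mem_singleton.mp this ▸ Finset.mem_insert_self _ _
  · exact Finset.insert_subset hzt.1 he.1

/-- Subcubic classification: in a connected subcubic triangle family, some triangle shares an
edge with every member. -/
theorem sub3_classification (A : Finset (Finset V)) (hA : A.Nonempty)
    (h3 : ∀ t ∈ A, t.card = 3)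
    (hconn : ∀ e ∈ EE A, ∀ f ∈ EE A, Reach (EE A) e f)
    (hsub3 : ∀ v, (starOf (EE A) v).card ≤ 3) :
    ∃ t₁ ∈ A, ∀ t ∈ A, ∃ e ∈ edgesOf t₁, e ⊆ t := by
  obtain ⟨t₁, ht₁⟩ := hA
  refine ⟨t₁, ht₁, ?_⟩
  have ht₁3 : t₁.card = 3 := h3 t₁ ht₁
  by_cases hext : ∃ t' ∈ A, t' ≠ t₁ ∧ (t' ∩ t₁).Nonempty
  case neg =>
    -- K = t₁ : every triangle touching t₁ equals t₁
    have hY : ∀ t ∈ A, (t ∩ t₁).Nonempty → t ⊆ t₁ := by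
      intro t ht hint
      by_cases h : t = t₁
      · exact h ▸ Finset.Subset.refl _
      · exact absurd ⟨t, ht, h, hint⟩ hext
    have hedge : ∀ g ∈ EE A, (g ∩ t₁).Nonempty → g ⊆ t₁ := by
      intro g hg hint
      obtain ⟨t, ht, hsub, hcard⟩ := mem_EE.mp hg
      obtain ⟨z, hz⟩ := hint
      rw [Finset.mem_inter] at hz
      exact hsub.trans (hY t ht ⟨z, Finset.mem_inter.mpr ⟨hsub hz.1, hz.2⟩⟩)
    intro t ht
    -- reach from an edge of t₁ to an edge of t
    obtain ⟨e₁, he₁⟩ : (edgesOf t₁).Nonempty := by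
      rw [← Finset.card_pos, edgesOf_card ht₁3]; omega
    obtain ⟨et, het⟩ : (edgesOf t).Nonempty := by
      rw [← Finset.card_pos, edgesOf_card (h3 t ht)]; omega
    have hr := hconn e₁ (edgesOf_subset_EE ht₁ he₁) et (edgesOf_subset_EE ht het)
    have hetK : et ⊆ t₁ := reach_closure hedge hr (mem_edgesOf.mp he₁).1
    have htK : t ⊆ t₁ := by
      obtain ⟨z, hz⟩ : et.Nonempty := by
        rw [← Finset.card_pos, (mem_edgesOf.mp het).2]; omega
      exact hY t ht ⟨z, Finset.mem_inter.mpr ⟨(mem_edgesOf.mp het).1 hz, hetK hz⟩⟩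
    have : t = t₁ := Finset.eq_of_subset_of_card_le htK (by rw [h3 t ht, ht₁3])
    exact ⟨et, this ▸ het, (mem_edgesOf.mp het).1⟩
  case pos =>
    obtain ⟨t', ht', hne', hint'⟩ := hext
    obtain ⟨e', he'1, he'⟩ := share_edge h3 hsub3 ht' ht₁ hne' hint'
    obtain ⟨y, hyt', hye', hyeq⟩ := third_vertex (h3 t' ht') he'1
    have hynott₁ : y ∉ t₁ := by
      intro hy
      have : t' ⊆ t₁ := hyeq ▸ Finset.insert_subset hy (mem_edgesOf.mp he').1
      exact hne' (Finset.eq_of_subset_of_card_le this (by rw [h3 t' ht', ht₁3]))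
    set K := insert y t₁ with hK
    have hKcard : K.card = 4 := by
      rw [hK, Finset.card_insert_of_notMem hynott₁, ht₁3]
    have ht₁K : t₁ ⊆ K := Finset.subset_insert _ _
    have ht'K : t' ⊆ K := by
      rw [hyeq]
      exact Finset.insert_subset (Finset.mem_insert_self _ _)
        ((mem_edgesOf.mp he').1.trans ht₁K)
    -- any triangle touching t₁ lies in K
    have hY : ∀ t ∈ A, (t ∩ t₁).Nonempty → t ⊆ K := by
      intro t ht hint
      by_cases heq : t = t₁
      · exact heq ▸ ht₁K
      obtain ⟨e, he1, he2⟩ := share_edge h3 hsub3 ht ht₁ heq hint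
      obtain ⟨z, hzt, hze, hzeq⟩ := third_vertex (h3 t ht) he1
      by_cases hz : z ∈ t₁
      · exact hzeq ▸ Finset.insert_subset (ht₁K hz) ((mem_edgesOf.mp he2).1.trans ht₁K)
      -- z ∉ t₁ : show z = y using the degree bound
      have hzy : z = y := by
        by_contra hzy
        obtain ⟨u, hu⟩ := edges_intersect ht₁3 he2 he'
        rw [Finset.mem_inter] at hu
        have hut₁ : u ∈ t₁ := (mem_edgesOf.mp he2).1 hu.1
        obtain ⟨p, q, hpq, hpqeq⟩ := Finset.card_eq_two.mp
          (by rw [Finset.card_erase_of_mem hut₁, ht₁3] : (t₁.erase u).card = 2)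
        have hpt₁ : p ∈ t₁ := (Finset.erase_subset _ _)
          (hpqeq ▸ (by simp : p ∈ ({p,q} : Finset V)))
        have hqt₁ : q ∈ t₁ := (Finset.erase_subset _ _)
          (hpqeq ▸ (by simp : q ∈ ({p,q} : Finset V)))
        have hpu : p ≠ u := Finset.ne_of_mem_erase
          (hpqeq ▸ (by simp : p ∈ ({p,q} : Finset V)))
        have hqu : q ≠ u := Finset.ne_of_mem_erase
          (hpqeq ▸ (by simp : q ∈ ({p,q} : Finset V)))
        have hut : u ∈ t := (mem_edgesOf.mp he1).1 hu.1
        have hut' : u ∈ t' := (mem_edgesOf.mp he'1).1 hu.2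
        have hzu : z ≠ u := fun h => hz (h ▸ hut₁)
        have hyu : y ≠ u := fun h => hynott₁ (h ▸ hut₁)
        have hzp : z ≠ p := fun h => hz (h ▸ hpt₁)
        have hzq : z ≠ q := fun h => hz (h ▸ hqt₁)
        have hyp : y ≠ p := fun h => hynott₁ (h ▸ hpt₁)
        have hyq : y ≠ q := fun h => hynott₁ (h ▸ hqt₁)
        have e1 : ({u, p} : Finset V) ∈ starOf (EE A) u := mem_starOf.mpr
          ⟨edgesOf_subset_EE ht₁ (pair_mem_edgesOf hut₁ hpt₁ (Ne.symm hpu)), by simp⟩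
        have e2 : ({u, q} : Finset V) ∈ starOf (EE A) u := mem_starOf.mpr
          ⟨edgesOf_subset_EE ht₁ (pair_mem_edgesOf hut₁ hqt₁ (Ne.symm hqu)), by simp⟩
        have e3 : ({u, z} : Finset V) ∈ starOf (EE A) u := mem_starOf.mpr
          ⟨edgesOf_subset_EE ht (pair_mem_edgesOf hut hzt (Ne.symm hzu)), by simp⟩
        have e4 : ({u, y} : Finset V) ∈ starOf (EE A) u := mem_starOf.mpr
          ⟨edgesOf_subset_EE ht' (pair_mem_edgesOf hut' hyt' (Ne.symm hyu)), by simp⟩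
        have hge := card_ge_four e1 e2 e3 e4 (pair_ne hpu hpq) (pair_ne hpu (Ne.symm hzp))
          (pair_ne hpu (Ne.symm hyp)) (pair_ne hqu (Ne.symm hzq)) (pair_ne hqu (Ne.symm hyq))
          (pair_ne hzu hzy)
        have := hsub3 u
        omega
      rw [hzeq, hzy]
      exact Finset.insert_subset (Finset.mem_insert_self _ _)
        ((mem_edgesOf.mp he2).1.trans ht₁K)
    -- any triangle touching K lies in K
    have hKt : ∀ t ∈ A, (t ∩ K).Nonempty → t ⊆ K := by
      intro t ht hint
      rcases Finset.eq_empty_or_nonempty (t ∩ t₁) with hemp | hnon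
      · -- t misses t₁, so it contains y and must share an edge with t'
        have hyt : y ∈ t := by
          obtain ⟨w, hw⟩ := hint
          rw [Finset.mem_inter, hK, Finset.mem_insert] at hw
          rcases hw.2 with rfl | hwt₁
          · exact hw.1
          · exact absurd (Finset.mem_inter.mpr ⟨hw.1, hwt₁⟩) (by simp [hemp])
        have htne : t ≠ t' := by
          rintro rfl
          obtain ⟨w, hw⟩ := hint'
          rw [Finset.mem_inter] at hw
          exact absurd (Finset.mem_inter.mpr ⟨hw.1, hw.2⟩) (by simp [hemp])
        obtain ⟨f, hf1, hf2⟩ := share_edge h3 hsub3 ht ht' htne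
          ⟨y, Finset.mem_inter.mpr ⟨hyt, hyt'⟩⟩
        -- f ⊆ t' = insert y e' but f ∩ t₁ = ∅, so f ⊆ {y}: contradiction
        have hfsub : f ⊆ t' := (mem_edgesOf.mp hf2).1
        have hfsingleton : f ⊆ {y} := by
          intro w hw
          have hwt' : w ∈ t' := hfsub hw
          rw [hyeq, Finset.mem_insert] at hwt'
          rcases hwt' with rfl | hwe'
          · exact Finset.mem_singleton_self _
          · have hwt₁ : w ∈ t₁ := (mem_edgesOf.mp he').1 hwe'
            have hwt : w ∈ t := (mem_edgesOf.mp hf1).1 hw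
            exact absurd (Finset.mem_inter.mpr ⟨hwt, hwt₁⟩) (by simp [hemp])
        have := Finset.card_le_card hfsingleton
        rw [(mem_edgesOf.mp hf1).2, Finset.card_singleton] at this
        omega
      · exact hY t ht hnon
    have hedge : ∀ g ∈ EE A, (g ∩ K).Nonempty → g ⊆ K := by
      intro g hg hint
      obtain ⟨t, ht, hsub, hcard⟩ := mem_EE.mp hg
      obtain ⟨z, hz⟩ := hint
      rw [Finset.mem_inter] at hz
      exact hsub.trans (hKt t ht ⟨z, Finset.mem_inter.mpr ⟨hsub hz.1, hz.2⟩⟩)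
    -- conclusion
    intro t ht
    obtain ⟨e₁, he₁⟩ : (edgesOf t₁).Nonempty := by
      rw [← Finset.card_pos, edgesOf_card ht₁3]; omega
    obtain ⟨et, het⟩ : (edgesOf t).Nonempty := by
      rw [← Finset.card_pos, edgesOf_card (h3 t ht)]; omega
    have hr := hconn e₁ (edgesOf_subset_EE ht₁ he₁) et (edgesOf_subset_EE ht het)
    have hetK : et ⊆ K := reach_closure hedge hr ((mem_edgesOf.mp he₁).1.trans ht₁K)
    have htK : t ⊆ K := by
      obtain ⟨z, hz⟩ : et.Nonempty := by
        rw [← Finset.card_pos, (mem_edgesOf.mp het).2]; omega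
      exact hKt t ht ⟨z, Finset.mem_inter.mpr ⟨(mem_edgesOf.mp het).1 hz, hetK hz⟩⟩
    by_cases heq : t = t₁
    · subst heq
      exact ⟨et, het, (mem_edgesOf.mp het).1⟩
    · -- |t ∩ t₁| ≥ 2 by inclusion–exclusion inside K
      have hunion : (t ∪ t₁).card ≤ 4 := hKcard ▸ Finset.card_le_card
        (Finset.union_subset htK ht₁K)
      have hie := Finset.card_union_add_card_inter t t₁
      have hint : (t ∩ t₁).Nonempty := by
        rw [← Finset.card_pos]
        have := h3 t ht
        omega
      obtain ⟨e, he1, he2⟩ := share_edge h3 hsub3 ht ht₁ heq hint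
      exact ⟨e, he2, (mem_edgesOf.mp he1).1⟩
/-! ### Boundary and pairing lemmas for stars -/

open scoped Classical in
theorem star_touch {E : Finset (Finset V)} {v : V} {e g : Finset V}
    (hr : Reach E e g) (he : e ∈ E) (hev : v ∉ e) (hgv : v ∈ g) :
    ∃ f, Reach (E.filter (fun x => v ∉ x)) e f ∧
      ∃ gg ∈ E, v ∈ gg ∧ (f ∩ gg).Nonempty := by
  classical
  set Xv := E.filter (fun x => v ∉ x) with hXv
  set TOUCH := ∃ f, Reach Xv e f ∧ ∃ gg ∈ E, v ∈ gg ∧ (f ∩ gg).Nonempty with hT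
  suffices H : ∀ h, Reach E e h → ((v ∉ h → (Reach Xv e h ∨ TOUCH)) ∧ (v ∈ h → TOUCH)) by
    exact (H g hr).2 hgv
  intro h hr'
  induction hr' with
  | refl =>
    constructor
    · intro _; left; exact .rfl
    · intro hve; exact absurd hve hev
  | @tail b c h1 h2 ih =>
    have hbE : b ∈ E := h2.1
    have hcE : c ∈ E := h2.2.1
    constructor
    · intro hcv
      by_cases hbv : v ∈ b
      · right; exact ih.2 hbv
      · rcases ih.1 hbv with hrb | ht
        · left
          refine hrb.tail ⟨?_, ?_, h2.2.2⟩
          · rw [hXv, Finset.mem_filter]; exact ⟨hbE, hbv⟩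
          · rw [hXv, Finset.mem_filter]; exact ⟨hcE, hcv⟩
        · right; exact ht
    · intro hcv
      by_cases hbv : v ∈ b
      · exact ih.2 hbv
      · rcases ih.1 hbv with hrb | ht
        · exact ⟨b, hrb, c, hcE, hcv, h2.2.2⟩
        · exact ht

open scoped Classical in
theorem cluster_boundary {E : Finset (Finset V)}
    (hconn : ∀ e ∈ E, ∀ f ∈ E, Reach E e f) {v : V} {C : Finset (Finset V)}
    (hC : C ∈ clustersOf (E.filter (fun x => v ∉ x)))
    {g₀ : Finset V} (hg₀ : g₀ ∈ E) (hg₀v : v ∈ g₀) :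
    ∃ f ∈ C, ∃ gg ∈ E, v ∈ gg ∧ (f ∩ gg).Nonempty := by
  classical
  obtain ⟨e, he, heq⟩ := Finset.mem_image.mp hC
  rw [Finset.mem_filter] at he
  have hr := hconn e he.1 g₀ hg₀
  obtain ⟨f, hreach, gg, hggE, hggv, hint⟩ := star_touch hr he.1 he.2 hg₀v
  refine ⟨f, ?_, gg, hggE, hggv, hint⟩
  rw [← heq]
  rw [mem_clusterOf]
  constructor
  · by_cases hef : e = f
    · subst hef; rw [Finset.mem_filter]; exact he
    · exact hreach.mem_right hef
  · exact hreach

theorem eq_of_two_mem {g : Finset V} (hcard : g.card = 2) {v w w' : V}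
    (hv : v ∈ g) (hw : w ∈ g) (hw' : w' ∈ g) (h1 : w ≠ v) (h2 : w' ≠ v) : w = w' := by
  obtain ⟨a, b, hab, rfl⟩ := Finset.card_eq_two.mp hcard
  simp only [Finset.mem_insert, Finset.mem_singleton] at hv hw hw'
  rcases hv with rfl | rfl <;> rcases hw with rfl | rfl <;> rcases hw' with rfl | rfl <;>
    first | rfl | (exact absurd rfl h1) | (exact absurd rfl h2)

theorem pair_eq_of_mem {g : Finset V} (hcard : g.card = 2) {v x : V}
    (hv : v ∈ g) (hx : x ∈ g) (hxv : x ≠ v) : g = {v, x} := by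
  have hsub : ({v, x} : Finset V) ⊆ g := Finset.insert_subset hv
    (Finset.singleton_subset_iff.mpr hx)
  have hc : ({v, x} : Finset V).card = 2 := by
    rw [Finset.card_insert_of_notMem (by simp [Ne.symm hxv]), Finset.card_singleton]
  exact (Finset.eq_of_subset_of_card_le hsub (by omega)).symm

open scoped Classical in
/-- Every cluster of the star-removed edge set receives a triangle through `v`. -/
theorem cluster_partner {A : Finset (Finset V)} (h3 : ∀ t ∈ A, t.card = 3)
    (hconn : ∀ e ∈ EE A, ∀ f ∈ EE A, Reach (EE A) e f) {v : V}
    {g₀ : Finset V} (hg₀ : g₀ ∈ EE A) (hg₀v : v ∈ g₀)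
    {C : Finset (Finset V)} (hC : C ∈ clustersOf ((EE A).filter (fun x => v ∉ x))) :
    ∃ x y t, x ≠ y ∧ x ≠ v ∧ y ≠ v ∧ ({v, x} : Finset V) ∈ EE A ∧
      ({v, y} : Finset V) ∈ EE A ∧ ({x, y} : Finset V) ∈ C ∧
      t ∈ A ∧ v ∈ t ∧ t.erase v = {x, y} := by
  classical
  obtain ⟨f, hfC, gg, hggE, hggv, hint⟩ := cluster_boundary hconn hC hg₀ hg₀v
  set Xv := (EE A).filter (fun x => v ∉ x) with hXv
  have hfXv : f ∈ Xv := by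
    have hCeq := cluster_eq_of_mem_clusters hC hfC
    exact clusterOf_subset (hCeq ▸ hfC)
  have hfv : v ∉ f := (Finset.mem_filter.mp hfXv).2
  obtain ⟨x, hx⟩ := hint
  rw [Finset.mem_inter] at hx
  have hxv : x ≠ v := fun h => hfv (h ▸ hx.1)
  have hggpair : gg = {v, x} := pair_eq_of_mem (EE_card2 hggE) hggv hx.2 hxv
  obtain ⟨t, htA, htsub, htcard⟩ := mem_EE.mp hggE
  have hggedge : gg ∈ edgesOf t := mem_edgesOf.mpr ⟨htsub, htcard⟩
  obtain ⟨y, hyt, hyg, hteq⟩ := third_vertex (h3 t htA) hggedge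
  have hyv : y ≠ v := fun h => hyg (h ▸ (hggpair ▸ Finset.mem_insert_self _ _))
  have hyx : y ≠ x := fun h => hyg (h ▸ (hggpair ▸ (by simp)))
  have hxt : x ∈ t := htsub (hggpair ▸ (by simp))
  have hvt : v ∈ t := htsub (hggpair ▸ Finset.mem_insert_self _ _)
  have hxyedge : ({x, y} : Finset V) ∈ edgesOf t := pair_mem_edgesOf hxt hyt (Ne.symm hyx)
  have hxyE : ({x, y} : Finset V) ∈ EE A := edgesOf_subset_EE htA hxyedge
  have hxyXv : ({x, y} : Finset V) ∈ Xv := by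
    rw [hXv, Finset.mem_filter]
    refine ⟨hxyE, ?_⟩
    simp only [Finset.mem_insert, Finset.mem_singleton]
    rintro (rfl | rfl)
    · exact hxv rfl
    · exact hyv rfl
  have hxyC : ({x, y} : Finset V) ∈ C := by
    have hCeq := cluster_eq_of_mem_clusters hC hfC
    rw [hCeq]
    exact step_mem_clusterOf (self_mem_clusterOf hfXv)
      ⟨hfXv, hxyXv, ⟨x, Finset.mem_inter.mpr ⟨hx.1, by simp⟩⟩⟩
  have herase : t.erase v = {x, y} := by
    rw [hteq, hggpair]
    ext w
    simp only [Finset.mem_erase, Finset.mem_insert, Finset.mem_singleton]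
    constructor
    · rintro ⟨hwv, rfl | rfl | rfl⟩
      · exact Or.inr rfl
      · exact absurd rfl hwv
      · exact Or.inl rfl
    · rintro (rfl | rfl)
      · exact ⟨hxv, Or.inr (Or.inr rfl)⟩
      · exact ⟨hyv, Or.inl rfl⟩
  have htA' : t ∈ A ∧ v ∈ t := ⟨htA, hvt⟩
  exact ⟨x, y, t, Ne.symm hyx, hxv, hyv,
    edgesOf_subset_EE htA (pair_mem_edgesOf hvt hxt (Ne.symm hxv)),
    edgesOf_subset_EE htA (pair_mem_edgesOf hvt hyt (Ne.symm hyv)),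
    hxyC, htA, hvt, herase⟩

open scoped Classical in
/-- The boundary stars of distinct clusters. -/
noncomputable def FF (E : Finset (Finset V)) (v : V) (C : Finset (Finset V)) :
    Finset (Finset V) :=
  (starOf E v).filter (fun g => ∃ e ∈ C, (e ∩ g).Nonempty)

theorem FF_subset {E : Finset (Finset V)} {v : V} {C : Finset (Finset V)} :
    FF E v C ⊆ starOf E v := Finset.filter_subset _ _

theorem FF_disjoint {A : Finset (Finset V)} {v : V}
    {C C' : Finset (Finset V)}
    (hC : C ∈ clustersOf ((EE A).filter (fun x => v ∉ x)))
    (hC' : C' ∈ clustersOf ((EE A).filter (fun x => v ∉ x)))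
    (hne : C ≠ C') : Disjoint (FF (EE A) v C) (FF (EE A) v C') := by
  classical
  rw [Finset.disjoint_left]
  intro g hg hg'
  obtain ⟨hgstar, e, heC, hint⟩ := Finset.mem_filter.mp hg
  obtain ⟨-, e', heC', hint'⟩ := Finset.mem_filter.mp hg'
  obtain ⟨hgE, hgv⟩ := mem_starOf.mp hgstar
  obtain ⟨z, hz⟩ := hint
  obtain ⟨z', hz'⟩ := hint'
  rw [Finset.mem_inter] at hz hz'
  have heXv : e ∈ (EE A).filter (fun x => v ∉ x) :=
    clusterOf_subset ((cluster_eq_of_mem_clusters hC heC) ▸ heC)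
  have heXv' : e' ∈ (EE A).filter (fun x => v ∉ x) :=
    clusterOf_subset ((cluster_eq_of_mem_clusters hC' heC') ▸ heC')
  have hzv : z ≠ v := fun h => (Finset.mem_filter.mp heXv).2 (h ▸ hz.1)
  have hzv' : z' ≠ v := fun h => (Finset.mem_filter.mp heXv').2 (h ▸ hz'.1)
  have hzz : z = z' := eq_of_two_mem (EE_card2 hgE) hgv hz.2 hz'.2 hzv hzv'
  -- e and e' are adjacent, so C = C'
  have hstep : Step ((EE A).filter (fun x => v ∉ x)) e e' :=
    ⟨heXv, heXv', ⟨z, Finset.mem_inter.mpr ⟨hz.1, hzz ▸ hz'.1⟩⟩⟩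
  have : e' ∈ C := by
    rw [cluster_eq_of_mem_clusters hC heC]
    exact step_mem_clusterOf (self_mem_clusterOf heXv) hstep
  rcases clusters_eq_or_disjoint hC hC' with h | h
  · exact hne h
  · exact h e' this heC'

open scoped Classical in
theorem FF_pair_mem {A : Finset (Finset V)} {v : V} {x : V}
    (hx : ({v, x} : Finset V) ∈ EE A) (hxv : x ≠ v)
    {C : Finset (Finset V)} {e : Finset V} (heC : e ∈ C) (hxe : x ∈ e) :
    ({v, x} : Finset V) ∈ FF (EE A) v C := by
  rw [FF, Finset.mem_filter]
  exact ⟨mem_starOf.mpr ⟨hx, by simp⟩, e, heC, ⟨x, Finset.mem_inter.mpr ⟨hxe, by simp⟩⟩⟩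

open scoped Classical in
theorem FF_two_le {A : Finset (Finset V)} (h3 : ∀ t ∈ A, t.card = 3)
    (hconn : ∀ e ∈ EE A, ∀ f ∈ EE A, Reach (EE A) e f) {v : V}
    {g₀ : Finset V} (hg₀ : g₀ ∈ EE A) (hg₀v : v ∈ g₀)
    {C : Finset (Finset V)} (hC : C ∈ clustersOf ((EE A).filter (fun x => v ∉ x))) :
    2 ≤ (FF (EE A) v C).card := by
  obtain ⟨x, y, t, hxy, hxv, hyv, hvx, hvy, hxyC, -, -, -⟩ :=
    cluster_partner h3 hconn hg₀ hg₀v hC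
  have h1 : ({v, x} : Finset V) ∈ FF (EE A) v C := FF_pair_mem hvx hxv hxyC (by simp)
  have h2 : ({v, y} : Finset V) ∈ FF (EE A) v C := FF_pair_mem hvy hyv hxyC (by simp)
  have hne : ({v, x} : Finset V) ≠ {v, y} := pair_ne hxv hxy
  have hsub : ({({v, x} : Finset V), ({v, y} : Finset V)} :
      Finset (Finset V)) ⊆ FF (EE A) v C := by
    intro w hw
    simp only [Finset.mem_insert, Finset.mem_singleton] at hw
    rcases hw with rfl | rfl <;> assumption
  have hcard : ({({v, x} : Finset V), ({v, y} : Finset V)} :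
      Finset (Finset V)).card = 2 := by
    rw [Finset.card_insert_of_notMem (by simp [hne]), Finset.card_singleton]
  have := Finset.card_le_card hsub
  omega

open scoped Classical in
/-- Pairing: the star of `v` has at least two edges per cluster of the rest. -/
theorem pairing {A : Finset (Finset V)} (h3 : ∀ t ∈ A, t.card = 3)
    (hconn : ∀ e ∈ EE A, ∀ f ∈ EE A, Reach (EE A) e f) {v : V}
    {g₀ : Finset V} (hg₀ : g₀ ∈ EE A) (hg₀v : v ∈ g₀) :
    2 * kk ((EE A).filter (fun x => v ∉ x)) ≤ (starOf (EE A) v).card := by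
  classical
  set S := clustersOf ((EE A).filter (fun x => v ∉ x)) with hS
  have hdisj : ∀ C ∈ S, ∀ C' ∈ S, C ≠ C' → Disjoint (FF (EE A) v C) (FF (EE A) v C') :=
    fun C hC C' hC' hne => FF_disjoint hC hC' hne
  have hbi : (S.biUnion (FF (EE A) v)).card = ∑ C ∈ S, (FF (EE A) v C).card :=
    Finset.card_biUnion hdisj
  have hsub : S.biUnion (FF (EE A) v) ⊆ starOf (EE A) v := by
    intro g hg
    obtain ⟨C, -, hgC⟩ := Finset.mem_biUnion.mp hg
    exact FF_subset hgC
  have hsum : S.card * 2 ≤ ∑ C ∈ S, (FF (EE A) v C).card := by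
    calc S.card * 2 = ∑ _C ∈ S, 2 := by rw [Finset.sum_const, smul_eq_mul]
    _ ≤ _ := Finset.sum_le_sum (fun C hC => FF_two_le h3 hconn hg₀ hg₀v hC)
  have hle := Finset.card_le_card hsub
  rw [hbi] at hle
  rw [kk, ← hS]
  omega
open scoped Classical in
theorem star_in_FF {A : Finset (Finset V)} (h3 : ∀ t ∈ A, t.card = 3) {v : V}
    {g : Finset V} (hg : g ∈ starOf (EE A) v) :
    ∃ D ∈ clustersOf ((EE A).filter (fun x => v ∉ x)), g ∈ FF (EE A) v D := by
  classical
  obtain ⟨hgE, hgv⟩ := mem_starOf.mp hg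
  obtain ⟨z, hzg⟩ := Finset.card_eq_one.mp
    (by rw [Finset.card_erase_of_mem hgv, EE_card2 hgE] : (g.erase v).card = 1)
  have hzmem : z ∈ g.erase v := hzg ▸ Finset.mem_singleton_self _
  have hzv : z ≠ v := Finset.ne_of_mem_erase hzmem
  have hzgm : z ∈ g := Finset.mem_of_mem_erase hzmem
  obtain ⟨t, htA, hsub, hcard⟩ := mem_EE.mp hgE
  obtain ⟨y, hyt, hyg, hteq⟩ := third_vertex (h3 t htA) (mem_edgesOf.mpr ⟨hsub, hcard⟩)
  have hyv : y ≠ v := fun h => hyg (h ▸ hgv)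
  have hyz : y ≠ z := fun h => hyg (h ▸ hzgm)
  have hzy : ({z, y} : Finset V) ∈ EE A :=
    edgesOf_subset_EE htA (pair_mem_edgesOf (hsub hzgm) hyt (Ne.symm hyz))
  have hzyXv : ({z, y} : Finset V) ∈ (EE A).filter (fun x => v ∉ x) := by
    rw [Finset.mem_filter]
    refine ⟨hzy, ?_⟩
    simp only [Finset.mem_insert, Finset.mem_singleton]
    rintro (rfl | rfl)
    · exact hzv rfl
    · exact hyv rfl
  refine ⟨clusterOf _ ({z, y} : Finset V), Finset.mem_image_of_mem _ hzyXv, ?_⟩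
  rw [FF, Finset.mem_filter]
  exact ⟨hg, {z, y}, self_mem_clusterOf hzyXv,
    ⟨z, Finset.mem_inter.mpr ⟨by simp, hzgm⟩⟩⟩

open scoped Classical in
theorem claim_main (A : Finset (Finset V)) (hA : A.Nonempty)
    (h3 : ∀ t ∈ A, t.card = 3)
    (hconn : ∀ e ∈ EE A, ∀ f ∈ EE A, Reach (EE A) e f) :
    ∃ U : Finset (Finset V), U ⊆ EE A ∧
      (∀ e ∈ U, ∀ f ∈ U, (e ∩ f).Nonempty) ∧
      (∃ t ∈ A, ∃ e ∈ U, e ⊆ t) ∧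
      (EE (survivors A U)).card + kk (EE (survivors A U)) + 4 ≤ (EE A).card + 1 := by
  classical
  set E := EE A with hEdef
  have hE3 : 3 ≤ E.card := by
    obtain ⟨t₀, ht₀⟩ := hA
    calc 3 = (edgesOf t₀).card := (edgesOf_card (h3 t₀ ht₀)).symm
    _ ≤ E.card := Finset.card_le_card (edgesOf_subset_EE ht₀)
  by_cases hsub3 : ∀ v, (starOf E v).card ≤ 3
  · -- subcubic case
    obtain ⟨t₁, ht₁A, hhit⟩ := sub3_classification A hA h3 hconn hsub3
    obtain ⟨e₁, he₁⟩ : (edgesOf t₁).Nonempty := by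
      rw [← Finset.card_pos, edgesOf_card (h3 t₁ ht₁A)]; omega
    refine ⟨edgesOf t₁, edgesOf_subset_EE ht₁A,
      (fun e he f hf => edges_intersect (h3 t₁ ht₁A) he hf),
      ⟨t₁, ht₁A, e₁, he₁, (mem_edgesOf.mp he₁).1⟩, ?_⟩
    have hsurv : survivors A (edgesOf t₁) = ∅ := by
      rw [Finset.eq_empty_iff_forall_notMem]
      intro t ht
      rw [mem_survivors] at ht
      obtain ⟨e, he, hesub⟩ := hhit t ht.1
      exact ht.2 e he hesub
    rw [hsurv]
    have h0 : EE (∅ : Finset (Finset V)) = ∅ := by simp [EE]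
    rw [h0]
    simp only [Finset.card_empty, kk_empty]
    omega
  -- there is a vertex of degree ≥ 4
  push_neg at hsub3
  obtain ⟨v₀, hv₀⟩ := hsub3
  have hv₀4 : 4 ≤ (starOf E v₀).card := hv₀
  have hcard2E : ∀ e ∈ E, e.card = 2 := fun e he => EE_card2 he
  by_cases hgood : ∃ v, 4 ≤ (starOf E v).card ∧
      (tautSet (E.filter (fun e => v ∉ e)) (EE (A.filter (fun t => v ∉ t)))).card + 3 ≤
        (starOf E v).card
  · -- good case: star at v
    obtain ⟨v, hdeg, htaut⟩ := hgood
    obtain ⟨g, hgst⟩ : (starOf E v).Nonempty := Finset.card_pos.mp (by omega)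
    obtain ⟨hgE, hgv⟩ := mem_starOf.mp hgst
    obtain ⟨tw, htwA, htwsub, -⟩ := mem_EE.mp hgE
    refine ⟨starOf E v, starOf_subset, (fun e he f hf => star_edges_intersect he hf),
      ⟨tw, htwA, g, hgst, htwsub⟩, ?_⟩
    rw [survivors_star h3 v]
    set Xv := E.filter (fun e => v ∉ e) with hXv
    set Yv := EE (A.filter (fun t => v ∉ t)) with hYv
    have hYX : Yv ⊆ Xv := by
      intro e he
      obtain ⟨t, ht, hsub, hcard⟩ := mem_EE.mp he
      rw [Finset.mem_filter] at ht
      rw [hXv, Finset.mem_filter]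
      refine ⟨EE_mono (Finset.filter_subset _ _) he, fun hv => ht.2 (hsub hv)⟩
    have h1 : kk Yv ≤ (Xv \ Yv).card + (tautSet Xv Yv).card :=
      kk_le_taut (fun e he => hcard2E e (Finset.mem_filter.mp he).1) hYX
    have h2 : (Xv \ Yv).card + Yv.card = Xv.card := Finset.card_sdiff_add_card_eq_card hYX
    have h3' : (starOf E v).card + Xv.card = E.card := by
      rw [hXv, starOf]
      exact Finset.card_filter_add_card_filter_not (p := fun e => v ∈ e)
    have h4 : Yv.card ≤ Xv.card := Finset.card_le_card hYX
    omega
  -- bad case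
  push_neg at hgood
  have hbad : ∀ v, 4 ≤ (starOf E v).card →
      (starOf E v).card ≤
        (tautSet (E.filter (fun e => v ∉ e)) (EE (A.filter (fun t => v ∉ t)))).card + 2 := by
    intro v hv
    have := hgood v hv
    omega
  -- structure of bad vertices
  have hstruct : ∀ v, 4 ≤ (starOf E v).card →
      (starOf E v).card = 4 ∧ kk (E.filter (fun e => v ∉ e)) = 2 ∧
      (tautSet (E.filter (fun e => v ∉ e)) (EE (A.filter (fun t => v ∉ t)))).card = 2 := by
    intro v hv
    obtain ⟨g, hgst⟩ : (starOf E v).Nonempty := Finset.card_pos.mp (by omega)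
    obtain ⟨hgE, hgv⟩ := mem_starOf.mp hgst
    have hpair := pairing h3 hconn hgE hgv
    rw [← hEdef] at hpair
    have ht1 : (tautSet (E.filter (fun e => v ∉ e)) (EE (A.filter (fun t => v ∉ t)))).card ≤
        kk (E.filter (fun e => v ∉ e)) := by
      rw [kk]
      exact Finset.card_le_card (Finset.filter_subset _ _)
    have hb := hbad v hv
    omega
  -- the candidate set and its minimum
  set cand : Finset (V × Finset (Finset V)) :=
    ((E.biUnion id).filter (fun v => 4 ≤ (starOf E v).card)).biUnion
      (fun v => (tautSet (E.filter (fun e => v ∉ e))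
        (EE (A.filter (fun t => v ∉ t)))).image (fun C => (v, C))) with hcand
  have hcandmem : ∀ w D, (w, D) ∈ cand ↔
      (4 ≤ (starOf E w).card ∧ D ∈ tautSet (E.filter (fun e => w ∉ e))
        (EE (A.filter (fun t => w ∉ t)))) := by
    intro w D
    rw [hcand, Finset.mem_biUnion]
    constructor
    · rintro ⟨u, hu, himg⟩
      obtain ⟨C', hC', heq⟩ := Finset.mem_image.mp himg
      have h1 : u = w := congrArg Prod.fst heq
      have h2 : C' = D := congrArg Prod.snd heq
      subst h1; subst h2
      exact ⟨(Finset.mem_filter.mp hu).2, hC'⟩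
    · rintro ⟨h1, h2⟩
      obtain ⟨g, hgst⟩ : (starOf E w).Nonempty := Finset.card_pos.mp (by omega)
      obtain ⟨hgE, hgw⟩ := mem_starOf.mp hgst
      refine ⟨w, Finset.mem_filter.mpr ⟨Finset.mem_biUnion.mpr ⟨g, hgE, hgw⟩, h1⟩, ?_⟩
      exact Finset.mem_image.mpr ⟨D, h2, rfl⟩
  have hcandne : cand.Nonempty := by
    obtain ⟨-, -, htc⟩ := hstruct v₀ hv₀4
    obtain ⟨C₀, hC₀⟩ : (tautSet (E.filter (fun e => v₀ ∉ e))
        (EE (A.filter (fun t => v₀ ∉ t)))).Nonempty := Finset.card_pos.mp (by omega)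
    exact ⟨(v₀, C₀), (hcandmem v₀ C₀).mpr ⟨hv₀4, hC₀⟩⟩
  obtain ⟨p, hpC, hmin⟩ := Finset.exists_min_image cand (fun p => p.2.card) hcandne
  obtain ⟨v, C⟩ := p
  obtain ⟨hvdeg, hCt⟩ := (hcandmem v C).mp hpC
  set Xv := E.filter (fun e => v ∉ e) with hXv
  set Yv := EE (A.filter (fun t => v ∉ t)) with hYv
  have hCcl : C ∈ clustersOf Xv := (Finset.mem_filter.mp hCt).1
  obtain ⟨hd4, hkk2, htc2⟩ := hstruct v hvdeg
  obtain ⟨g₀, hg₀st⟩ : (starOf E v).Nonempty := Finset.card_pos.mp (by omega)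
  obtain ⟨hg₀E, hg₀v⟩ := mem_starOf.mp hg₀st
  -- vertices of C
  set W : Finset V := C.biUnion id with hW
  have hWmem : ∀ z, z ∈ W ↔ ∃ e ∈ C, z ∈ e := by
    intro z
    simp only [hW, Finset.mem_biUnion, id]
  have hCXv : C ⊆ Xv := by
    intro e he
    exact clusterOf_subset ((cluster_eq_of_mem_clusters hCcl he) ▸ he)
  have hvW : v ∉ W := by
    intro hv
    obtain ⟨e, heC, hve⟩ := (hWmem v).mp hv
    exact (Finset.mem_filter.mp (hCXv heC)).2 hve
  have hK1 : ∀ f ∈ Xv, (∃ z ∈ f, z ∈ W) → f ∈ C := by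
    rintro f hf ⟨z, hzf, hzW⟩
    obtain ⟨ec, hecC, hzec⟩ := (hWmem z).mp hzW
    have := cluster_eq_of_mem_clusters hCcl hecC
    rw [this]
    exact step_mem_clusterOf (self_mem_clusterOf (hCXv hecC))
      ⟨hCXv hecC, hf, ⟨z, Finset.mem_inter.mpr ⟨hzec, hzf⟩⟩⟩
  -- minimality gives: all vertices of W have degree at most 3
  have hsubW : ∀ w ∈ W, (starOf E w).card ≤ 3 := by
    intro w hw
    by_contra hcon
    push_neg at hcon
    have hw4 : 4 ≤ (starOf E w).card := hcon
    have hws := hstruct w hw4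
    have hvw : v ≠ w := fun h => hvW (h ▸ hw)
    -- a star edge of v avoiding w
    have hstarw : (starOf E v).filter (fun g => w ∈ g) ⊆ {({v, w} : Finset V)} := by
      intro g hg
      rw [Finset.mem_filter] at hg
      obtain ⟨hgst, hgw⟩ := hg
      obtain ⟨hgE, hgv⟩ := mem_starOf.mp hgst
      rw [Finset.mem_singleton]
      exact pair_eq_of_mem (EE_card2 hgE) hgv hgw (fun h => hvw h.symm)
    have hgOex : ((starOf E v).filter (fun g => w ∉ g)).Nonempty := by
      by_contra hemp
      rw [Finset.not_nonempty_iff_eq_empty] at hemp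
      have h1 := Finset.card_filter_add_card_filter_not
        (s := starOf E v) (p := fun g => w ∈ g)
      have h2 : ((starOf E v).filter (fun g => w ∈ g)).card ≤ 1 := by
        calc _ ≤ ({({v, w} : Finset V)} : Finset (Finset V)).card :=
              Finset.card_le_card hstarw
        _ = 1 := Finset.card_singleton _
      rw [hemp] at h1
      simp at h1
      omega
    obtain ⟨gO, hgO⟩ := hgOex
    rw [Finset.mem_filter] at hgO
    obtain ⟨hgOst, hgOw⟩ := hgO
    obtain ⟨hgOE, hgOv⟩ := mem_starOf.mp hgOst
    set Xw := E.filter (fun e => w ∉ e) with hXw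
    have hgOXw : gO ∈ Xw := Finset.mem_filter.mpr ⟨hgOE, hgOw⟩
    set O := clusterOf Xw gO with hO
    have hOcl : O ∈ clustersOf Xw := Finset.mem_image_of_mem _ hgOXw
    -- O covers everything outside C and star w
    have hcover : ∀ e ∈ E, w ∉ e → e ∉ C → e ∈ O := by
      intro e heE hew heC
      by_cases hve : v ∈ e
      · -- e shares v with gO
        have heXw : e ∈ Xw := Finset.mem_filter.mpr ⟨heE, hew⟩
        rw [hO]
        exact step_mem_clusterOf (self_mem_clusterOf hgOXw)
          ⟨hgOXw, heXw, ⟨v, Finset.mem_inter.mpr ⟨hgOv, hve⟩⟩⟩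
      · -- e is in a cluster D' ≠ C of Xv
        have heXv : e ∈ Xv := Finset.mem_filter.mpr ⟨heE, hve⟩
        set D' := clusterOf Xv e with hD'
        have hD'cl : D' ∈ clustersOf Xv := Finset.mem_image_of_mem _ heXv
        have hD'C : D' ≠ C := by
          intro h
          exact heC (h ▸ self_mem_clusterOf heXv)
        -- D' avoids w
        have hD'w : ∀ f ∈ D', w ∉ f := by
          intro f hf hwf
          have hfXv : f ∈ Xv := clusterOf_subset hf
          have hfC : f ∈ C := hK1 f hfXv ⟨w, hwf, hw⟩
          rcases clusters_eq_or_disjoint hD'cl hCcl with h | h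
          · exact hD'C h
          · exact h f hf hfC
        -- boundary of D'
        obtain ⟨f, hfD', gg, hggE, hggv, hint⟩ := cluster_boundary hconn hD'cl hg₀E hg₀v
        obtain ⟨x, hx⟩ := hint
        rw [Finset.mem_inter] at hx
        have hfXv : f ∈ Xv := clusterOf_subset hfD'
        have hxv : x ≠ v := fun h => (Finset.mem_filter.mp hfXv).2 (h ▸ hx.1)
        have hggXw : gg ∈ Xw := by
          refine Finset.mem_filter.mpr ⟨hggE, ?_⟩
          intro hwgg
          have : w = x := by
            have hgg2 := EE_card2 hggE
            exact eq_of_two_mem hgg2 hggv hwgg hx.2 (fun h => hvw h.symm) hxv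
          exact hD'w f hfD' (this ▸ hx.1)
        -- reach from e to f inside D', then to gg, then to gO
        have hreachef : Reach Xw e f := by
          have h1 : Reach Xv e f := (mem_clusterOf.mp hfD').2
          have h2 : Reach D' e f := hD' ▸ reach_clusterOf heXv h1
          refine h2.mono ?_
          intro f' hf'
          exact Finset.mem_filter.mpr ⟨(Finset.mem_filter.mp (clusterOf_subset hf')).1,
            hD'w f' hf'⟩
        have hfXw : f ∈ Xw := Finset.mem_filter.mpr
          ⟨(Finset.mem_filter.mp hfXv).1, hD'w f hfD'⟩
        have hreach : Reach Xw e gO :=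
          (hreachef.tail ⟨hfXw, hggXw, ⟨x, Finset.mem_inter.mpr ⟨hx.1, hx.2⟩⟩⟩).tail
            ⟨hggXw, hgOXw, ⟨v, Finset.mem_inter.mpr ⟨hggv, hgOv⟩⟩⟩
        rw [hO, mem_clusterOf]
        exact ⟨Finset.mem_filter.mpr ⟨heE, hew⟩, hreach.symm⟩
    -- pick a taut cluster of w different from O
    have h2t : 2 ≤ (tautSet Xw (EE (A.filter (fun t => w ∉ t)))).card := by
      have := hws.2.2
      omega
    obtain ⟨D, hD, hDO⟩ := Finset.exists_mem_ne
      (s := tautSet Xw (EE (A.filter (fun t => w ∉ t)))) (by omega) O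
    have hDcl : D ∈ clustersOf Xw := (Finset.mem_filter.mp hD).1
    have hDXw : D ⊆ Xw := by
      intro e he
      exact clusterOf_subset ((cluster_eq_of_mem_clusters hDcl he) ▸ he)
    have hDsubC : D ⊆ C := by
      intro e he
      have heXw := hDXw he
      rw [Finset.mem_filter] at heXw
      by_contra heC
      have heO : e ∈ O := hcover e heXw.1 heXw.2 heC
      rcases clusters_eq_or_disjoint hDcl hOcl with h | h
      · exact hDO h
      · exact h e he heO
    obtain ⟨ec, hecC, hwec⟩ := (hWmem w).mp hw
    have hecD : ec ∉ D := by
      intro h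
      exact (Finset.mem_filter.mp (hDXw h)).2 hwec
    have hssub : D ⊂ C := Finset.ssubset_iff_of_subset hDsubC |>.mpr ⟨ec, hecC, hecD⟩
    have hcard : D.card < C.card := Finset.card_lt_card hssub
    have hwD : (w, D) ∈ cand := (hcandmem w D).mpr ⟨hw4, hD⟩
    have := hmin (w, D) hwD
    simp only at this
    omega
  -- the two clusters of Xv
  obtain ⟨D₁, D₂, hD12ne, hD12eq⟩ := Finset.card_eq_two.mp hkk2
  have hCpair : C = D₁ ∨ C = D₂ := by
    have := hCcl
    rw [hD12eq] at this
    simpa using this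
  obtain ⟨C₂, hC₂cl, hCC₂ne, hcleq⟩ :
      ∃ C₂, C₂ ∈ clustersOf Xv ∧ C ≠ C₂ ∧ clustersOf Xv = {C, C₂} := by
    rcases hCpair with rfl | rfl
    · exact ⟨D₂, by rw [hD12eq]; simp, hD12ne, hD12eq⟩
    · exact ⟨D₁, by rw [hD12eq]; simp, Ne.symm hD12ne, by rw [hD12eq, Finset.pair_comm]⟩
  -- partner triangles
  obtain ⟨a, b, T1, hab, hav, hbv, hva, hvb, habC, hT1A, hvT1, hT1er⟩ :=
    cluster_partner h3 hconn hg₀E hg₀v hCcl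
  obtain ⟨c, d, T2, hcd, hcv, hdv, hvc, hvd, hcdC₂, hT2A, hvT2, hT2er⟩ :=
    cluster_partner h3 hconn hg₀E hg₀v hC₂cl
  have haW : a ∈ W := (hWmem a).mpr ⟨{a, b}, habC, by simp⟩
  have hbW : b ∈ W := (hWmem b).mpr ⟨{a, b}, habC, by simp⟩
  -- the boundary stars
  set FC := FF E v C with hFC
  set FC₂ := FF E v C₂ with hFC₂
  have hFCdisj : Disjoint FC FC₂ := FF_disjoint hCcl hC₂cl hCC₂ne
  have hFC2le : 2 ≤ FC.card := FF_two_le h3 hconn hg₀E hg₀v hCcl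
  have hFC₂2le : 2 ≤ FC₂.card := FF_two_le h3 hconn hg₀E hg₀v hC₂cl
  have hFCcover : starOf E v ⊆ FC ∪ FC₂ := by
    intro g hg
    obtain ⟨D, hDcl, hgD⟩ := star_in_FF h3 hg
    rw [hcleq] at hDcl
    simp only [Finset.mem_insert, Finset.mem_singleton] at hDcl
    rcases hDcl with rfl | rfl
    · exact Finset.mem_union_left _ hgD
    · exact Finset.mem_union_right _ hgD
  have hFCcards : FC.card = 2 ∧ FC₂.card = 2 := by
    have h1 : (FC ∪ FC₂).card = FC.card + FC₂.card := Finset.card_union_of_disjoint hFCdisj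
    have h2 : (FC ∪ FC₂).card ≤ 4 := by
      rw [← hd4]
      exact Finset.card_le_card (Finset.union_subset FF_subset FF_subset)
    omega
  have hFCeq : FC = {({v, a} : Finset V), ({v, b} : Finset V)} := by
    symm
    apply Finset.eq_of_subset_of_card_le
    · intro g hg
      simp only [Finset.mem_insert, Finset.mem_singleton] at hg
      rcases hg with rfl | rfl
      · exact FF_pair_mem hva hav habC (by simp)
      · exact FF_pair_mem hvb hbv habC (by simp)
    · rw [hFCcards.1]
      rw [Finset.card_insert_of_notMem (by simp [pair_ne hav hab]), Finset.card_singleton]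
  -- the side family
  set B : Finset (Finset V) := A.filter
    (fun t => (∃ e ∈ edgesOf t, e ∈ C) ∨ (v ∈ t ∧ t.erase v ∈ C)) with hB
  have hBsubA : B ⊆ A := Finset.filter_subset _ _
  have hT1B : T1 ∈ B := by
    rw [hB, Finset.mem_filter]
    exact ⟨hT1A, Or.inr ⟨hvT1, hT1er ▸ habC⟩⟩
  -- β1: the edges of members of B lie in C ∪ FC
  have hβ1 : ∀ t ∈ B, ∀ g ∈ edgesOf t, g ∈ C ∪ FC := by
    intro t ht g hg
    rw [hB, Finset.mem_filter] at ht
    obtain ⟨htA, hcase⟩ := ht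
    have ht3 := h3 t htA
    -- find an edge h₀ of t inside C
    have hh₀ : ∃ h₀ ∈ edgesOf t, h₀ ∈ C := by
      rcases hcase with h | ⟨hvt, her⟩
      · exact h
      · exact ⟨t.erase v, erase_mem_edgesOf ht3 hvt, her⟩
    obtain ⟨h₀, hh₀e, hh₀C⟩ := hh₀
    by_cases hvg : v ∈ g
    · -- g is a star edge touching C
      refine Finset.mem_union_right _ ?_
      rw [hFC, FF, Finset.mem_filter]
      refine ⟨mem_starOf.mpr ⟨edgesOf_subset_EE htA hg, hvg⟩, h₀, hh₀C, ?_⟩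
      obtain ⟨z, hz⟩ := edges_intersect ht3 hh₀e hg
      exact ⟨z, hz⟩
    · -- g avoids v and touches C
      refine Finset.mem_union_left _ ?_
      have hgXv : g ∈ Xv := Finset.mem_filter.mpr ⟨edgesOf_subset_EE htA hg, hvg⟩
      obtain ⟨z, hz⟩ := edges_intersect ht3 hg hh₀e
      rw [Finset.mem_inter] at hz
      exact hK1 g hgXv ⟨z, hz.1, (hWmem z).mpr ⟨h₀, hh₀C, hz.2⟩⟩
  have hCsubEEB : C ⊆ EE B := by
    intro e heC
    have heE : e ∈ E := (Finset.mem_filter.mp (hCXv heC)).1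
    obtain ⟨t, htA, hsub, hcard⟩ := mem_EE.mp heE
    have htB : t ∈ B := by
      rw [hB, Finset.mem_filter]
      exact ⟨htA, Or.inl ⟨e, mem_edgesOf.mpr ⟨hsub, hcard⟩, heC⟩⟩
    exact Finset.mem_biUnion.mpr ⟨t, htB, mem_edgesOf.mpr ⟨hsub, hcard⟩⟩
  have hEEBsub : EE B ⊆ C ∪ FC := by
    intro g hg
    obtain ⟨t, htB, hsub, hcard⟩ := mem_EE.mp hg
    exact hβ1 t htB g (mem_edgesOf.mpr ⟨hsub, hcard⟩)
  have hEEBeq : EE B = C ∪ FC := by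
    apply Finset.Subset.antisymm hEEBsub
    intro g hg
    rcases Finset.mem_union.mp hg with h | h
    · exact hCsubEEB h
    · rw [hFCeq] at h
      simp only [Finset.mem_insert, Finset.mem_singleton] at h
      have hT1b : edgesOf T1 ⊆ EE B := edgesOf_subset_EE hT1B
      have haT1 : a ∈ T1 := by
        have : a ∈ T1.erase v := hT1er ▸ (by simp)
        exact Finset.mem_of_mem_erase this
      have hbT1 : b ∈ T1 := by
        have : b ∈ T1.erase v := hT1er ▸ (by simp)
        exact Finset.mem_of_mem_erase this
      rcases h with rfl | rfl
      · exact hT1b (pair_mem_edgesOf hvT1 haT1 (Ne.symm hav))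
      · exact hT1b (pair_mem_edgesOf hvT1 hbT1 (Ne.symm hbv))
  -- connectivity of EE B
  have hreachC : ∀ e ∈ C, ∀ f ∈ C, Reach (EE B) e f := by
    intro e he f hf
    have h1 : Reach Xv e f := by
      have he' := cluster_eq_of_mem_clusters hCcl he
      have : Reach Xv e f := by
        have hfm : f ∈ clusterOf Xv e := he' ▸ hf
        exact (mem_clusterOf.mp hfm).2
      exact this
    have h2 : Reach (clusterOf Xv e) e f := reach_clusterOf (hCXv he) h1
    refine h2.mono ?_
    rw [← cluster_eq_of_mem_clusters hCcl he]
    exact hCsubEEB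
  have hconnB : ∀ e ∈ EE B, ∀ f ∈ EE B, Reach (EE B) e f := by
    have habB : ({a, b} : Finset V) ∈ EE B := hCsubEEB habC
    -- every element reaches {a,b}
    have hanchor : ∀ e ∈ EE B, Reach (EE B) e ({a, b} : Finset V) := by
      intro e he
      have he' := hEEBsub he
      rcases Finset.mem_union.mp he' with h | h
      · exact hreachC e h _ habC
      · rw [hFCeq] at h
        simp only [Finset.mem_insert, Finset.mem_singleton] at h
        rcases h with rfl | rfl
        · exact Reach.single ⟨he, habB, ⟨a, Finset.mem_inter.mpr ⟨by simp, by simp⟩⟩⟩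
        · exact Reach.single ⟨he, habB, ⟨b, Finset.mem_inter.mpr ⟨by simp, by simp⟩⟩⟩
    intro e he f hf
    exact (hanchor e he).trans (hanchor f hf).symm
  -- B is subcubic
  have hstarmono : ∀ z, starOf (EE B) z ⊆ starOf E z := by
    intro z g hg
    obtain ⟨h1, h2⟩ := mem_starOf.mp hg
    refine mem_starOf.mpr ⟨?_, h2⟩
    rcases Finset.mem_union.mp (hEEBsub h1) with h | h
    · exact (Finset.mem_filter.mp (hCXv h)).1
    · exact starOf_subset (FF_subset h)
  have hsub3B : ∀ z, (starOf (EE B) z).card ≤ 3 := by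
    intro z
    by_cases hzW : z ∈ W
    · exact le_trans (Finset.card_le_card (hstarmono z)) (hsubW z hzW)
    by_cases hzv : z = v
    · subst hzv
      have : starOf (EE B) z ⊆ FC := by
        intro g hg
        obtain ⟨h1, h2⟩ := mem_starOf.mp hg
        rcases Finset.mem_union.mp (hEEBsub h1) with h | h
        · exact absurd h2 ((Finset.mem_filter.mp (hCXv h)).2)
        · exact h
      calc (starOf (EE B) z).card ≤ FC.card := Finset.card_le_card this
      _ ≤ 3 := by omega
    · have : starOf (EE B) z = ∅ := by
        rw [Finset.eq_empty_iff_forall_notMem]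
        intro g hg
        obtain ⟨h1, h2⟩ := mem_starOf.mp hg
        rcases Finset.mem_union.mp (hEEBsub h1) with h | h
        · exact hzW ((hWmem z).mpr ⟨g, h, h2⟩)
        · rw [hFCeq] at h
          simp only [Finset.mem_insert, Finset.mem_singleton] at h
          rcases h with rfl | rfl
          · simp only [Finset.mem_insert, Finset.mem_singleton] at h2
            rcases h2 with rfl | rfl
            · exact hzv rfl
            · exact hzW haW
          · simp only [Finset.mem_insert, Finset.mem_singleton] at h2
            rcases h2 with rfl | rfl
            · exact hzv rfl
            · exact hzW hbW
      rw [this]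
      simp
  -- classify B and pick the hitting triangle
  obtain ⟨t₁, ht₁B, hhit⟩ := sub3_classification B ⟨T1, hT1B⟩
    (fun t ht => h3 t (hBsubA ht)) hconnB hsub3B
  have ht₁A : t₁ ∈ A := hBsubA ht₁B
  obtain ⟨e₁, he₁⟩ : (edgesOf t₁).Nonempty := by
    rw [← Finset.card_pos, edgesOf_card (h3 t₁ ht₁A)]; omega
  have hUsubE : edgesOf t₁ ⊆ E := by
    intro e he
    rcases Finset.mem_union.mp (hEEBsub (edgesOf_subset_EE ht₁B he)) with h | h
    · exact (Finset.mem_filter.mp (hCXv h)).1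
    · exact starOf_subset (FF_subset h)
  refine ⟨edgesOf t₁, hUsubE,
    (fun e he f hf => edges_intersect (h3 t₁ ht₁A) he hf),
    ⟨t₁, ht₁A, e₁, he₁, (mem_edgesOf.mp he₁).1⟩, ?_⟩
  -- survivors are exactly the triangles not in B
  have hsurvB : ∀ t ∈ A, ((∀ e ∈ edgesOf t₁, ¬ e ⊆ t) ↔ t ∉ B) := by
    intro t htA
    constructor
    · intro hs htB
      obtain ⟨e, he, hesub⟩ := hhit t htB
      exact hs e he hesub
    · intro htB u hu husub
      have hu2 : u.card = 2 := (mem_edgesOf.mp hu).2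
      have huE : u ∈ EE B := edgesOf_subset_EE ht₁B hu
      have huet : u ∈ edgesOf t := mem_edgesOf.mpr ⟨husub, hu2⟩
      rcases Finset.mem_union.mp (hEEBsub huE) with h | h
      · exact htB (Finset.mem_filter.mpr ⟨htA, Or.inl ⟨u, huet, h⟩⟩)
      · -- u ∈ FC: so u = {v,a} or {v,b}; then t.erase v ∈ C
        rw [hFCeq] at h
        simp only [Finset.mem_insert, Finset.mem_singleton] at h
        have hvt : v ∈ t := husub (by
          rcases h with rfl | rfl <;> simp)
        have herase : t.erase v ∈ C := by
          apply hK1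
          · refine Finset.mem_filter.mpr ⟨edgesOf_subset_EE htA
              (erase_mem_edgesOf (h3 t htA) hvt), ?_⟩
            simp
          · rcases h with rfl | rfl
            · refine ⟨a, ?_, haW⟩
              refine Finset.mem_erase.mpr ⟨hav, husub (by simp)⟩
            · refine ⟨b, ?_, hbW⟩
              refine Finset.mem_erase.mpr ⟨hbv, husub (by simp)⟩
        exact htB (Finset.mem_filter.mpr ⟨htA, Or.inr ⟨hvt, herase⟩⟩)
  have hEES : EE (survivors A (edgesOf t₁)) = E \ (C ∪ FC) := by
    ext g
    constructor
    · intro hg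
      obtain ⟨t, ht, hsub, hcard⟩ := mem_EE.mp hg
      rw [mem_survivors] at ht
      have htB : t ∉ B := (hsurvB t ht.1).mp ht.2
      refine Finset.mem_sdiff.mpr ⟨edgesOf_subset_EE ht.1 (mem_edgesOf.mpr ⟨hsub, hcard⟩), ?_⟩
      intro hgCF
      -- then t would be in B
      rcases Finset.mem_union.mp hgCF with h | h
      · exact htB (Finset.mem_filter.mpr ⟨ht.1, Or.inl ⟨g, mem_edgesOf.mpr ⟨hsub, hcard⟩, h⟩⟩)
      · rw [hFCeq] at h
        simp only [Finset.mem_insert, Finset.mem_singleton] at h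
        have hvt : v ∈ t := hsub (by rcases h with rfl | rfl <;> simp)
        have herase : t.erase v ∈ C := by
          apply hK1
          · refine Finset.mem_filter.mpr ⟨edgesOf_subset_EE ht.1
              (erase_mem_edgesOf (h3 t ht.1) hvt), ?_⟩
            simp
          · rcases h with rfl | rfl
            · exact ⟨a, Finset.mem_erase.mpr ⟨hav, hsub (by simp)⟩, haW⟩
            · exact ⟨b, Finset.mem_erase.mpr ⟨hbv, hsub (by simp)⟩, hbW⟩
        exact htB (Finset.mem_filter.mpr ⟨ht.1, Or.inr ⟨hvt, herase⟩⟩)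
    · intro hg
      rw [Finset.mem_sdiff] at hg
      obtain ⟨t, htA, hsub, hcard⟩ := mem_EE.mp hg.1
      have htB : t ∉ B := by
        intro htB
        exact hg.2 (hβ1 t htB g (mem_edgesOf.mpr ⟨hsub, hcard⟩))
      refine Finset.mem_biUnion.mpr ⟨t, ?_, mem_edgesOf.mpr ⟨hsub, hcard⟩⟩
      rw [mem_survivors]
      exact ⟨htA, (hsurvB t htA).mpr htB⟩
  -- connectivity of the complement, via the anchor {v, c}
  have hC₂Xv : C₂ ⊆ Xv := fun e he =>
    clusterOf_subset ((cluster_eq_of_mem_clusters hC₂cl he) ▸ he)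
  have hvcFC₂ : ({v, c} : Finset V) ∈ FC₂ := FF_pair_mem hvc hcv hcdC₂ (by simp)
  have hvcE' : ({v, c} : Finset V) ∈ E \ (C ∪ FC) := by
    refine Finset.mem_sdiff.mpr ⟨hvc, ?_⟩
    intro h
    rcases Finset.mem_union.mp h with h | h
    · exact (Finset.mem_filter.mp (hCXv h)).2 (by simp)
    · exact (Finset.disjoint_left.mp hFCdisj) h hvcFC₂
  have hC₂E' : C₂ ⊆ E \ (C ∪ FC) := by
    intro e he
    refine Finset.mem_sdiff.mpr ⟨(Finset.mem_filter.mp (hC₂Xv he)).1, ?_⟩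
    intro h
    rcases Finset.mem_union.mp h with h | h
    · rcases clusters_eq_or_disjoint hC₂cl hCcl with heq | hdis
      · exact hCC₂ne heq.symm
      · exact hdis e he h
    · exact (Finset.mem_filter.mp (hC₂Xv he)).2 ((mem_starOf.mp (FF_subset h)).2)
  have hcdE' : ({c, d} : Finset V) ∈ E \ (C ∪ FC) := hC₂E' hcdC₂
  have hanchor' : ∀ e ∈ E \ (C ∪ FC), Reach (E \ (C ∪ FC)) e ({v, c} : Finset V) := by
    intro e he
    obtain ⟨heE, heCF⟩ := Finset.mem_sdiff.mp he
    by_cases hve : v ∈ e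
    · exact Reach.single ⟨he, hvcE', ⟨v, Finset.mem_inter.mpr ⟨hve, by simp⟩⟩⟩
    · have heXv : e ∈ Xv := Finset.mem_filter.mpr ⟨heE, hve⟩
      have hecl : clusterOf Xv e ∈ clustersOf Xv := Finset.mem_image_of_mem _ heXv
      have heC₂ : e ∈ C₂ := by
        rw [hcleq] at hecl
        simp only [Finset.mem_insert, Finset.mem_singleton] at hecl
        rcases hecl with hq | hq
        · exact absurd (fun hh => heCF (Finset.mem_union_left _ hh))
            (by
              intro hcon
              exact hcon (hq ▸ self_mem_clusterOf heXv))
        · exact hq ▸ self_mem_clusterOf heXv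
      have h1 : Reach Xv e ({c, d} : Finset V) := by
        have hmem : ({c, d} : Finset V) ∈ clusterOf Xv e := by
          rw [← cluster_eq_of_mem_clusters hC₂cl heC₂]
          exact hcdC₂
        exact (mem_clusterOf.mp hmem).2
      have h2 : Reach (clusterOf Xv e) e ({c, d} : Finset V) := reach_clusterOf heXv h1
      have h3' : Reach (E \ (C ∪ FC)) e ({c, d} : Finset V) := by
        refine h2.mono ?_
        rw [← cluster_eq_of_mem_clusters hC₂cl heC₂]
        exact hC₂E'
      exact h3'.tail ⟨hcdE', hvcE', ⟨c, Finset.mem_inter.mpr ⟨by simp, by simp⟩⟩⟩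
  have hkkE' : kk (E \ (C ∪ FC)) ≤ 1 :=
    kk_le_one_of_conn (fun e he f hf => (hanchor' e he).trans (hanchor' f hf).symm)
  -- cardinalities
  have hCFsubE : C ∪ FC ⊆ E := Finset.union_subset
    (fun e he => (Finset.mem_filter.mp (hCXv he)).1)
    (fun e he => starOf_subset (FF_subset he))
  have hcards : (E \ (C ∪ FC)).card + (C ∪ FC).card = E.card :=
    Finset.card_sdiff_add_card_eq_card hCFsubE
  have hCFdisj : Disjoint C FC := by
    rw [Finset.disjoint_left]
    intro e heC heF
    exact (Finset.mem_filter.mp (hCXv heC)).2 ((mem_starOf.mp (FF_subset heF)).2)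
  have hCFcard : (C ∪ FC).card = C.card + 2 := by
    rw [Finset.card_union_of_disjoint hCFdisj, hFCcards.1]
  have hC3 : 3 ≤ C.card := by
    have hCt' := (Finset.mem_filter.mp hCt).2
    have hYC : (Yv ∩ C).Nonempty := by
      by_contra hemp
      rw [Finset.not_nonempty_iff_eq_empty] at hemp
      apply hCt'
      rw [hemp, kk_empty]
      omega
    obtain ⟨e, he⟩ := hYC
    rw [Finset.mem_inter] at he
    obtain ⟨t, htAv, hsub, hcard⟩ := mem_EE.mp he.1
    rw [Finset.mem_filter] at htAv
    have hedges : edgesOf t ⊆ C := by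
      intro f hf
      have hfE : f ∈ E := edgesOf_subset_EE htAv.1 hf
      have hfXv : f ∈ Xv := Finset.mem_filter.mpr
        ⟨hfE, fun hv => htAv.2 ((mem_edgesOf.mp hf).1 hv)⟩
      obtain ⟨z, hz⟩ := edges_intersect (h3 t htAv.1) hf (mem_edgesOf.mpr ⟨hsub, hcard⟩)
      rw [Finset.mem_inter] at hz
      exact hK1 f hfXv ⟨z, hz.1, (hWmem z).mpr ⟨e, he.2, hz.2⟩⟩
    calc 3 = (edgesOf t).card := (edgesOf_card (h3 t htAv.1)).symm
    _ ≤ C.card := Finset.card_le_card hedges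
  rw [hEES]
  omega
/-! ### The main claim (one unit with potential drop ≥ 4) and the core covering theorem -/

theorem core_aux : ∀ (N : ℕ) (A : Finset (Finset V)), A.card ≤ N →
    (∀ t ∈ A, t.card = 3) →
    ∃ us : List (Finset (Finset V)),
      (∀ u ∈ us, u ⊆ EE A ∧ ∀ e ∈ u, ∀ f ∈ u, (e ∩ f).Nonempty) ∧
      (∀ t ∈ A, ∃ u ∈ us, ∃ e ∈ u, e ⊆ t) ∧
      4 * us.length ≤ (EE A).card + kk (EE A) := by
  intro N
  induction N with
  | zero =>
    intro A hcard _
    have : A = ∅ := Finset.card_eq_zero.mp (Nat.le_zero.mp hcard)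
    subst this
    exact ⟨[], by simp, by simp, by simp [EE]⟩
  | succ N ih =>
    intro A hcard h3
    rcases Finset.eq_empty_or_nonempty A with rfl | ⟨t₀, ht₀⟩
    · exact ⟨[], by simp, by simp, by simp [EE]⟩
    classical
    set E := EE A with hE
    have ht₀3 : t₀.card = 3 := h3 t₀ ht₀
    obtain ⟨e₀, he₀⟩ : (edgesOf t₀).Nonempty := by
      rw [← Finset.card_pos, edgesOf_card ht₀3]; omega
    have he₀E : e₀ ∈ E := edgesOf_subset_EE ht₀ he₀
    set A₁ := A.filter (fun t => ∃ f ∈ edgesOf t, Reach E e₀ f) with hA₁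
    set C := clusterOf E e₀ with hC
    have hCmem : C ∈ clustersOf E := Finset.mem_image_of_mem _ he₀E
    have hEEA₁ : EE A₁ = C := by
      ext g
      rw [mem_EE]
      constructor
      · rintro ⟨t, ht, hsub, hcardg⟩
        rw [hA₁, Finset.mem_filter] at ht
        obtain ⟨htA, f, hf, hrf⟩ := ht
        have hgt : g ∈ edgesOf t := mem_edgesOf.mpr ⟨hsub, hcardg⟩
        have hfg : (f ∩ g).Nonempty := edges_intersect (h3 t htA) hf hgt
        have hfE : f ∈ E := edgesOf_subset_EE htA hf
        have hgE : g ∈ E := edgesOf_subset_EE htA hgt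
        exact mem_clusterOf.mpr ⟨hgE, hrf.tail ⟨hfE, hgE, hfg⟩⟩
      · intro hg
        obtain ⟨hgE, hreach⟩ := mem_clusterOf.mp hg
        obtain ⟨t, htA, hsub, hcardg⟩ := mem_EE.mp hgE
        refine ⟨t, ?_, hsub, hcardg⟩
        rw [hA₁, Finset.mem_filter]
        exact ⟨htA, g, mem_edgesOf.mpr ⟨hsub, hcardg⟩, hreach⟩
    have hA₁sub : A₁ ⊆ A := Finset.filter_subset _ _
    have ht₀A₁ : t₀ ∈ A₁ := by
      rw [hA₁, Finset.mem_filter]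
      exact ⟨ht₀, e₀, he₀, .rfl⟩
    have h3A₁ : ∀ t ∈ A₁, t.card = 3 := fun t ht => h3 t (hA₁sub ht)
    have hconnA₁ : ∀ e ∈ EE A₁, ∀ f ∈ EE A₁, Reach (EE A₁) e f := by
      intro e he f hf
      rw [hEEA₁] at he hf ⊢
      obtain ⟨heE, hre⟩ := mem_clusterOf.mp he
      obtain ⟨hfE, hrf⟩ := mem_clusterOf.mp hf
      have hef : Reach E e f := hre.symm.trans hrf
      have := reach_clusterOf heE hef
      rwa [← clusterOf_eq_of_reach hre] at this
    obtain ⟨U, hUsub, hUint, ⟨tk, htk, ek, hekU, heksub⟩, hUbound⟩ :=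
      claim_main A₁ ⟨t₀, ht₀A₁⟩ h3A₁ hconnA₁
    rw [hEEA₁] at hUsub hUbound
    -- survivors of A decompose
    set A' := survivors A U with hA'
    have hAsplit : A' = survivors A₁ U ∪ (A \ A₁) := by
      ext t
      simp only [hA', mem_survivors, Finset.mem_union, Finset.mem_sdiff]
      constructor
      · rintro ⟨htA, hK⟩
        by_cases ht1 : t ∈ A₁
        · exact Or.inl ⟨ht1, hK⟩
        · exact Or.inr ⟨htA, ht1⟩
      · rintro (⟨ht1, hK⟩ | ⟨htA, ht1⟩)
        · exact ⟨hA₁sub ht1, hK⟩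
        · refine ⟨htA, fun e heU hsub => ht1 ?_⟩
          rw [hA₁, Finset.mem_filter]
          have heC := hUsub heU
          refine ⟨htA, e, mem_edgesOf.mpr ⟨hsub, EE_card2 (clusterOf_subset heC)⟩, ?_⟩
          exact (mem_clusterOf.mp heC).2
    have hEErest : EE (A \ A₁) = E \ C := by
      ext g
      rw [mem_EE]
      constructor
      · rintro ⟨t, ht, hsub, hcardg⟩
        rw [Finset.mem_sdiff] at ht
        have hgE : g ∈ E := edgesOf_subset_EE ht.1 (mem_edgesOf.mpr ⟨hsub, hcardg⟩)
        refine Finset.mem_sdiff.mpr ⟨hgE, fun hgC => ht.2 ?_⟩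
        rw [hA₁, Finset.mem_filter]
        exact ⟨ht.1, g, mem_edgesOf.mpr ⟨hsub, hcardg⟩, (mem_clusterOf.mp hgC).2⟩
      · intro hg
        rw [Finset.mem_sdiff] at hg
        obtain ⟨t, htA, hsub, hcardg⟩ := mem_EE.mp hg.1
        refine ⟨t, Finset.mem_sdiff.mpr ⟨htA, fun ht1 => ?_⟩, hsub, hcardg⟩
        exact hg.2 (hEEA₁ ▸ Finset.mem_biUnion.mpr ⟨t, ht1, mem_edgesOf.mpr ⟨hsub, hcardg⟩⟩)
    have hEEA'split : EE A' = EE (survivors A₁ U) ∪ EE (A \ A₁) := by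
      rw [hAsplit]
      ext g
      simp only [mem_EE, Finset.mem_union]
      constructor
      · rintro ⟨t, ht, h1, h2⟩
        rcases ht with h | h
        · exact Or.inl ⟨t, h, h1, h2⟩
        · exact Or.inr ⟨t, h, h1, h2⟩
      · rintro (⟨t, ht, h1, h2⟩ | ⟨t, ht, h1, h2⟩)
        · exact ⟨t, Or.inl ht, h1, h2⟩
        · exact ⟨t, Or.inr ht, h1, h2⟩
    have hsurvC : EE (survivors A₁ U) ⊆ C := hEEA₁ ▸ EE_mono survivors_subset
    have hnoadj : ∀ e ∈ EE (survivors A₁ U), ∀ f ∈ EE (A \ A₁), ¬ (e ∩ f).Nonempty := by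
      intro e he f hf
      exact cluster_no_cross (hsurvC he) (hEErest ▸ hf)
    have hdisj : Disjoint (EE (survivors A₁ U)) (EE (A \ A₁)) := by
      rw [Finset.disjoint_left]
      intro e he hf
      exact (Finset.mem_sdiff.mp (hEErest ▸ hf)).2 (hsurvC he)
    -- cards
    have hcardsplit : (EE A').card = (EE (survivors A₁ U)).card + (EE (A \ A₁)).card := by
      rw [hEEA'split, Finset.card_union_of_disjoint hdisj]
    have hkksplit : kk (EE A') = kk (EE (survivors A₁ U)) + kk (EE (A \ A₁)) := by
      rw [hEEA'split, kk_union hdisj hnoadj]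
    -- ambient split of E
    have hnoadjE : ∀ e ∈ C, ∀ f ∈ E \ C, ¬ (e ∩ f).Nonempty := fun e he f hf =>
      cluster_no_cross he hf
    have hdisjE : Disjoint C (E \ C) := by
      rw [Finset.disjoint_left]
      intro e he hf
      exact (Finset.mem_sdiff.mp hf).2 he
    have hEsplit : C ∪ (E \ C) = E := Finset.union_sdiff_of_subset clusterOf_subset
    have hkkE : kk E = 1 + kk (E \ C) := by
      have h1 : kk (C ∪ (E \ C)) = kk C + kk (E \ C) := kk_union hdisjE hnoadjE
      rw [hEsplit] at h1
      rw [h1, kk_cluster_eq_one hCmem]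
    have hcardE : E.card = C.card + (E \ C).card := by
      conv_lhs => rw [← hEsplit]
      rw [Finset.card_union_of_disjoint hdisjE]
    -- recursion
    have htknot : tk ∉ A' := by
      rw [hA', mem_survivors]
      push_neg
      intro h
      exact ⟨ek, hekU, heksub⟩
    have hA'card : A'.card ≤ N := by
      have hsub : A' ⊆ A := survivors_subset
      have hlt : A'.card < A.card := Finset.card_lt_card
        (Finset.ssubset_iff_of_subset hsub |>.mpr ⟨tk, hA₁sub htk, htknot⟩)
      omega
    obtain ⟨us', hus'1, hus'2, hus'3⟩ := ih A' hA'card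
      (fun t ht => h3 t (survivors_subset ht))
    refine ⟨U :: us', ?_, ?_, ?_⟩
    · intro u hu
      rcases List.mem_cons.mp hu with rfl | hu
      · exact ⟨fun e he => clusterOf_subset (hUsub he), hUint⟩
      · obtain ⟨h1, h2⟩ := hus'1 u hu
        exact ⟨h1.trans (EE_mono survivors_subset), h2⟩
    · intro t ht
      by_cases ht' : t ∈ A'
      · obtain ⟨u, hu, he⟩ := hus'2 t ht'
        exact ⟨u, List.mem_cons_of_mem _ hu, he⟩
      · refine ⟨U, List.mem_cons_self, ?_⟩
        rw [hA', mem_survivors] at ht'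
        push_neg at ht'
        obtain ⟨e, he, hsub⟩ := ht' ht
        exact ⟨e, he, hsub⟩
    · simp only [List.length_cons]
      have h1 : 4 * (us'.length + 1) = 4 * us'.length + 4 := by ring
      rw [h1]
      calc 4 * us'.length + 4 ≤ ((EE A').card + kk (EE A')) + 4 := by omega
      _ = ((EE (survivors A₁ U)).card + kk (EE (survivors A₁ U)) + 4)
          + ((EE (A \ A₁)).card + kk (EE (A \ A₁))) := by
          rw [hcardsplit, hkksplit]; ring
      _ ≤ (C.card + 1) + ((E \ C).card + kk (E \ C)) := by
          have h2 : (EE (A \ A₁)).card = (E \ C).card := by rw [hEErest]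
          have h3' : kk (EE (A \ A₁)) = kk (E \ C) := by rw [hEErest]
          omega
      _ = E.card + kk E := by rw [hcardE, hkkE]; ring
/-! ### Connectivity of the edge set of a connected graph -/

theorem reach_of_walk {V : Type*} [DecidableEq V] (G : SimpleGraph V)
    (EG : Finset (Finset V)) (hEG : ∀ x y, G.Adj x y → ({x, y} : Finset V) ∈ EG)
    {a c : V} (p : G.Walk a c) :
    ∀ (e f : Finset V), e ∈ EG → f ∈ EG → a ∈ e → c ∈ f → Reach EG e f := by
  induction p with
  | nil =>
    intro e f he hf ha hc
    exact Reach.single ⟨he, hf, ⟨_, Finset.mem_inter.mpr ⟨ha, hc⟩⟩⟩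
  | @cons x y z h q ih =>
    intro e f he hf ha hc
    have hg : ({x, y} : Finset V) ∈ EG := hEG x y h
    refine Reach.trans (Reach.single ⟨he, hg, ⟨x, Finset.mem_inter.mpr ⟨ha, by simp⟩⟩⟩) ?_
    exact ih _ f hg hf (by simp) hc

end NotArrow

open NotArrow in
theorem not_arrows_main (n : ℕ) (hn : 0 < n)
    (V : Type) [Finite V] (G : SimpleGraph V) (hconn : G.Connected)
    (hE : G.edgeSet.ncard ≤ 4 * n - 2) :
    ¬ Arrows G (Matching n) (cycleGraph 3) := by
  classical
  letI : Fintype V := Fintype.ofFinite V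
  -- the triangles of G and the edges of G, as finsets of finsets
  set T : Finset (Finset V) := Finset.univ.filter
    (fun t => t.card = 3 ∧ ∀ x ∈ t, ∀ y ∈ t, x ≠ y → G.Adj x y) with hT
  set EG : Finset (Finset V) := Finset.univ.filter
    (fun e => ∃ x y, G.Adj x y ∧ e = {x, y}) with hEG
  have hmemEG : ∀ x y, G.Adj x y → ({x, y} : Finset V) ∈ EG := by
    intro x y h
    rw [hEG, Finset.mem_filter]
    exact ⟨Finset.mem_univ _, x, y, h, rfl⟩
  have hEGadj : ∀ {x y : V}, x ≠ y → ({x, y} : Finset V) ∈ EG → G.Adj x y := by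
    intro x y hxy hmem
    rw [hEG, Finset.mem_filter] at hmem
    obtain ⟨-, a, b, hab, heq⟩ := hmem
    have hx : x ∈ ({a, b} : Finset V) := heq ▸ Finset.mem_insert_self _ _
    have hy : y ∈ ({a, b} : Finset V) := heq ▸ (by simp)
    simp only [Finset.mem_insert, Finset.mem_singleton] at hx hy
    rcases hx with rfl | rfl
    · rcases hy with rfl | rfl
      · exact absurd rfl hxy
      · exact hab
    · rcases hy with rfl | rfl
      · exact hab.symm
      · exact absurd rfl hxy
  have hEGcard2 : ∀ e ∈ EG, e.card = 2 := by
    intro e he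
    rw [hEG, Finset.mem_filter] at he
    obtain ⟨-, x, y, hxy, rfl⟩ := he
    rw [Finset.card_insert_of_notMem (by simp [G.ne_of_adj hxy]), Finset.card_singleton]
  have h3 : ∀ t ∈ T, t.card = 3 := by
    intro t ht; rw [hT, Finset.mem_filter] at ht; exact ht.2.1
  have hEET : EE T ⊆ EG := by
    intro e he
    obtain ⟨t, ht, hsub, hcard⟩ := mem_EE.mp he
    obtain ⟨x, y, hxy, rfl⟩ := Finset.card_eq_two.mp hcard
    rw [hT, Finset.mem_filter] at ht
    exact hmemEG x y (ht.2.2 x (hsub (by simp)) y (hsub (by simp)) hxy)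
  -- connectivity of EG
  have hEGconn : ∀ e ∈ EG, ∀ f ∈ EG, Reach EG e f := by
    intro e he f hf
    have he' := he; have hf' := hf
    rw [hEG, Finset.mem_filter] at he' hf'
    obtain ⟨-, x, y, hxy, rfl⟩ := he'
    obtain ⟨-, x', y', hxy', rfl⟩ := hf'
    obtain ⟨p⟩ := hconn.preconnected x x'
    exact reach_of_walk G EG hmemEG p _ _ he hf (by simp) (by simp)
  -- edge count
  have hEGcard : EG.card ≤ 4 * n - 2 := by
    have hψ : EG = G.edgeFinset.image
        (Sym2.lift ⟨fun x y => ({x, y} : Finset V), fun a b => Finset.pair_comm a b⟩) := by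
      ext e
      constructor
      · intro he
        rw [hEG, Finset.mem_filter] at he
        obtain ⟨-, x, y, hxy, rfl⟩ := he
        exact Finset.mem_image.mpr ⟨s(x, y), SimpleGraph.mem_edgeFinset.mpr hxy, rfl⟩
      · intro he
        obtain ⟨ε, hε, rfl⟩ := Finset.mem_image.mp he
        induction ε with
        | _ x y =>
          exact hmemEG x y (SimpleGraph.mem_edgeFinset.mp hε)
    calc EG.card ≤ G.edgeFinset.card := hψ ▸ Finset.card_image_le
    _ = G.edgeSet.ncard := by
        rw [Set.ncard_eq_toFinset_card']
        congr 1
    _ ≤ 4 * n - 2 := hE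
  -- apply the core covering theorem
  obtain ⟨us, hus1, hus2, hus3⟩ := core_aux T.card T le_rfl h3
  have hkkEET : kk (EE T) ≤ (EG \ EE T).card + kk EG :=
    kk_le_card_sdiff_add_kk hEGcard2 _ _ hEET rfl
  have hkkEG : kk EG ≤ 1 := kk_le_one_of_conn hEGconn
  have hsd : (EG \ EE T).card = EG.card - (EE T).card := Finset.card_sdiff_of_subset hEET
  have hEETcard : (EE T).card ≤ EG.card := Finset.card_le_card hEET
  have hlen : us.length < n := by
    have h4 : 4 * us.length ≤ EG.card + 1 := by omega
    omega
  -- define the red graph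
  set R : SimpleGraph V := SimpleGraph.fromRel
    (fun x y => ∃ u ∈ us, ({x, y} : Finset V) ∈ u) with hR
  have hpair : ∀ {x y : V}, R.Adj x y → x ≠ y ∧ ∃ u ∈ us, ({x, y} : Finset V) ∈ u := by
    intro x y h
    rw [hR, SimpleGraph.fromRel_adj] at h
    obtain ⟨hne, h | h⟩ := h
    · exact ⟨hne, h⟩
    · obtain ⟨u, hu, hmem⟩ := h
      exact ⟨hne, u, hu, by rwa [Finset.pair_comm]⟩
  have hRG : R ≤ G := by
    intro x y h
    obtain ⟨hne, u, hu, hmem⟩ := hpair h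
    have : ({x, y} : Finset V) ∈ EG := hEET ((hus1 u hu).1 hmem)
    exact hEGadj hne this
  intro harr
  rcases harr R hRG with ⟨f, hf⟩ | ⟨g, hg⟩
  · -- red matching: pigeonhole
    have hadj : ∀ i : Fin n, R.Adj (f (i, 0)) (f (i, 1)) := by
      intro i
      exact f.map_adj (show (Matching n).Adj (i, 0) (i, 1) from
        ⟨rfl, show (0 : Fin 2) ≠ (1 : Fin 2) by decide⟩)
    have hexk : ∀ i : Fin n, ∃ k : Fin us.length,
        ({f (i, 0), f (i, 1)} : Finset V) ∈ us.get k := by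
      intro i
      obtain ⟨-, u, hu, hmem⟩ := hpair (hadj i)
      obtain ⟨k, hk⟩ := List.mem_iff_get.mp hu
      exact ⟨k, hk ▸ hmem⟩
    choose κ hκ using hexk
    have hcardlt : Fintype.card (Fin us.length) < Fintype.card (Fin n) := by
      simpa using hlen
    obtain ⟨i, i', hne, heq⟩ := Fintype.exists_ne_map_eq_of_card_lt κ hcardlt
    have h1 := hκ i
    have h2 := hκ i'
    rw [heq] at h1
    have hint := (hus1 _ (us.get_mem _)).2 _ h1 _ h2
    obtain ⟨z, hz⟩ := hint
    rw [Finset.mem_inter] at hz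
    have hz1 := hz.1
    have hz2 := hz.2
    simp only [Finset.mem_insert, Finset.mem_singleton] at hz1 hz2
    have : ∃ (a b : Fin 2), f (i', a) = f (i, b) := by
      rcases hz1 with rfl | rfl <;> rcases hz2 with h | h
      · exact ⟨0, 0, h.symm⟩
      · exact ⟨1, 0, h.symm⟩
      · exact ⟨0, 1, h.symm⟩
      · exact ⟨1, 1, h.symm⟩
    obtain ⟨a, b, hab⟩ := this
    have := hf hab
    rw [Prod.mk.injEq] at this
    exact hne (this.1.symm)
  · -- blue triangle
    have hadjtop : ∀ {a b : Fin 3}, a ≠ b → (G \ R).Adj (g a) (g b) := by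
      intro a b hab
      refine g.map_adj ?_
      rw [cycleGraph_three_eq_top]
      exact hab
    have hginj : ∀ {a b : Fin 3}, g a = g b → a = b := fun h => hg h
    set t : Finset V := {g 0, g 1, g 2} with ht
    have htmem : ∀ z ∈ t, ∃ a : Fin 3, z = g a := by
      intro z hz
      rw [ht] at hz
      simp only [Finset.mem_insert, Finset.mem_singleton] at hz
      rcases hz with rfl | rfl | rfl
      · exact ⟨0, rfl⟩
      · exact ⟨1, rfl⟩
      · exact ⟨2, rfl⟩
    have htT : t ∈ T := by
      rw [hT, Finset.mem_filter]
      refine ⟨Finset.mem_univ _, ?_, ?_⟩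
      · rw [ht]
        rw [Finset.card_insert_of_notMem, Finset.card_insert_of_notMem, Finset.card_singleton]
        · simp only [Finset.mem_singleton]
          intro h
          exact absurd (hginj h) (by decide)
        · simp only [Finset.mem_insert, Finset.mem_singleton]
          rintro (h | h) <;> exact absurd (hginj h) (by decide)
      · intro x hx y hy hxy
        obtain ⟨a, rfl⟩ := htmem x hx
        obtain ⟨b, rfl⟩ := htmem y hy
        have hab : a ≠ b := fun h => hxy (h ▸ rfl)
        exact ((G.sdiff_adj R _ _).mp (hadjtop hab)).1
    obtain ⟨u, hu, e, heu, hesub⟩ := hus2 t htT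
    have hecard : e.card = 2 := EE_card2 ((hus1 u hu).1 heu)
    obtain ⟨x, y, hxy, rfl⟩ := Finset.card_eq_two.mp hecard
    have hxT : x ∈ t := hesub (by simp)
    have hyT : y ∈ t := hesub (by simp)
    obtain ⟨a, rfl⟩ := htmem x hxT
    obtain ⟨b, rfl⟩ := htmem y hyT
    have hab : a ≠ b := fun h => hxy (h ▸ rfl)
    have hblue := hadjtop hab
    have hnored := ((G.sdiff_adj R _ _).mp hblue).2
    exact hnored ((SimpleGraph.fromRel_adj _ _ _).mpr ⟨hxy, Or.inl ⟨u, hu, heu⟩⟩)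

/-- For every positive integer `n`, every connected graph with at most `4n−2`
edges does not arrow `(nK₂, C₃)`. -/
theorem not_arrows_matching_triangle_of_few_edges (n : ℕ) (hn : 0 < n)
    (V : Type) [Finite V] (G : SimpleGraph V) (hconn : G.Connected)
    (hE : G.edgeSet.ncard ≤ 4 * n - 2) :
    ¬ Arrows G (Matching n) (cycleGraph 3) :=
  not_arrows_main n hn V G hconn hE
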